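/- arXiv:2304.13881 — 6 statements merged into one kernel-verified Lean document; each statement's English description precedes it below -/
import Mathlib

section
/- Let G : ℝⁿ → 𝔽 be twice continuously differentiable, let W ⊆ 𝔽 be a linear subspace, and let x̄, d ∈ ℝⁿ be such that DG(x̄)d lies in the orthogonal complement of W. If there exists a neighborhood V of x̄ such that the dimension of DG(x)*[W] is the same for all x ∈ V, then there exist ε > 0 and a twice continuously differentiable curve ξ : (−ε, ε) → ℝⁿ with ξ(0) = x̄, ξ′(0) = d, and ⟨G(ξ(t)), V⟩ = ⟨G(x̄), V⟩ for every t ∈ (−ε, ε) and every V ∈ W. -/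
open Set Module RealInnerProductSpace

set_option maxHeartbeats 1000000 in
lemma aux_ker_adjoint_eq {E F : Type*} [NormedAddCommGroup E] [InnerProductSpace ℝ E]
    [NormedAddCommGroup F] [InnerProductSpace ℝ F] [FiniteDimensional ℝ E] [FiniteDimensional ℝ F]
    (T : E →L[ℝ] F) :
    LinearMap.ker (ContinuousLinearMap.adjoint T).toLinearMap = (LinearMap.range T.toLinearMap)ᗮ := by
  ext v
  simp only [LinearMap.mem_ker, Submodule.mem_orthogonal, ContinuousLinearMap.coe_coe]
  constructor
  · intro h u hu
    obtain ⟨x, rfl⟩ := LinearMap.mem_range.mp hu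
    rw [ContinuousLinearMap.coe_coe, real_inner_comm, ← ContinuousLinearMap.adjoint_inner_left, h, inner_zero_left]
  · intro h
    have h2 : ⟪ContinuousLinearMap.adjoint T v, ContinuousLinearMap.adjoint T v⟫ = (0:ℝ) := by
      rw [ContinuousLinearMap.adjoint_inner_left, real_inner_comm]
      exact h _ (LinearMap.mem_range.mpr ⟨_, rfl⟩)
    exact inner_self_eq_zero.mp h2

set_option maxHeartbeats 1000000 in
lemma aux_finrank_range_adjoint_eq {E F : Type*} [NormedAddCommGroup E] [InnerProductSpace ℝ E]
    [NormedAddCommGroup F] [InnerProductSpace ℝ F] [FiniteDimensional ℝ E] [FiniteDimensional ℝ F]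
    (T : E →L[ℝ] F) :
    finrank ℝ (LinearMap.range (ContinuousLinearMap.adjoint T).toLinearMap) =
      finrank ℝ (LinearMap.range T.toLinearMap) := by
  have h1 := LinearMap.finrank_range_add_finrank_ker (ContinuousLinearMap.adjoint T : F →ₗ[ℝ] E)
  have h2 := Submodule.finrank_add_finrank_orthogonal (LinearMap.range T.toLinearMap)
  have h3 : LinearMap.ker (ContinuousLinearMap.adjoint T : F →ₗ[ℝ] E)
      = LinearMap.ker (ContinuousLinearMap.adjoint T).toLinearMap := rfl
  have h4 : LinearMap.range (ContinuousLinearMap.adjoint T : F →ₗ[ℝ] E)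
      = LinearMap.range (ContinuousLinearMap.adjoint T).toLinearMap := rfl
  rw [h3, h4, aux_ker_adjoint_eq] at h1
  omega

set_option maxHeartbeats 4000000 in
theorem stmt_3 {n : ℕ} {𝔽 : Type*} [NormedAddCommGroup 𝔽] [InnerProductSpace ℝ 𝔽]
    [FiniteDimensional ℝ 𝔽]
    (G : EuclideanSpace ℝ (Fin n) → 𝔽) (hG : ContDiff ℝ 2 G)
    (W : Submodule ℝ 𝔽) (xb d : EuclideanSpace ℝ (Fin n))
    (hd : fderiv ℝ G xb d ∈ Wᗮ)
    (hcr : ∃ r : ℕ, ∀ᶠ x in nhds xb,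
      finrank ℝ ↥(W.map (ContinuousLinearMap.adjoint (fderiv ℝ G x)).toLinearMap) = r) :
    ∃ ε > (0 : ℝ), ∃ ξ : ℝ → EuclideanSpace ℝ (Fin n),
      ContDiffOn ℝ 2 ξ (Set.Ioo (-ε) ε) ∧ ξ 0 = xb ∧ deriv ξ 0 = d ∧
      ∀ t ∈ Set.Ioo (-ε) ε, ∀ V ∈ W, ⟪G (ξ t), V⟫ = ⟪G xb, V⟫ := by
  obtain ⟨r, hr⟩ := hcr
  have hGdiff : Differentiable ℝ G := hG.differentiable (by norm_num)
  set P : 𝔽 →L[ℝ] W := Submodule.orthogonalProjectionOnto W with hP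
  set h : EuclideanSpace ℝ (Fin n) → W := fun x => P (G x) with hh
  have hhC : ContDiff ℝ 2 h := P.contDiff.comp hG
  set Dh : EuclideanSpace ℝ (Fin n) → (EuclideanSpace ℝ (Fin n) →L[ℝ] W) :=
    fun x => P.comp (fderiv ℝ G x) with hDhdef
  have hDh : ∀ x, HasFDerivAt h (Dh x) x := fun x =>
    (P.hasFDerivAt).comp x (hGdiff x).hasFDerivAt
  -- Step 1 : constant rank of Dh near xb
  have hrank : ∀ᶠ x in nhds xb, finrank ℝ (LinearMap.range (Dh x).toLinearMap) = r := by
    filter_upwards [hr] with x hx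
    have hadj : ContinuousLinearMap.adjoint (Dh x)
        = (ContinuousLinearMap.adjoint (fderiv ℝ G x)).comp W.subtypeL := by
      rw [hDhdef]
      rw [ContinuousLinearMap.adjoint_comp, hP, Submodule.adjoint_orthogonalProjectionOnto]
    have hrg : LinearMap.range (ContinuousLinearMap.adjoint (Dh x)).toLinearMap
        = W.map (ContinuousLinearMap.adjoint (fderiv ℝ G x)).toLinearMap := by
      rw [hadj]
      ext y
      simp only [LinearMap.mem_range, Submodule.mem_map, ContinuousLinearMap.coe_comp',
        Function.comp_apply, ContinuousLinearMap.coe_coe, Submodule.coe_subtypeL,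
        Submodule.coe_subtype]
      constructor
      · rintro ⟨w, rfl⟩
        exact ⟨w, w.2, rfl⟩
      · rintro ⟨w, hw, rfl⟩
        exact ⟨⟨w, hw⟩, rfl⟩
    rw [← aux_finrank_range_adjoint_eq (Dh x), hrg, hx]
  -- Step 2 : linear algebra at xb
  set A := Dh xb with hA
  set K := LinearMap.ker A.toLinearMap with hK
  have hdK : d ∈ K := by
    rw [hK, LinearMap.mem_ker, hA, hDhdef]
    simp only [ContinuousLinearMap.coe_coe, ContinuousLinearMap.coe_comp', Function.comp_apply, hP]
    exact Submodule.orthogonalProjectionOnto_apply_of_mem_orthogonal hd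
  have hEdim : finrank ℝ (EuclideanSpace ℝ (Fin n)) = n := finrank_euclideanSpace_fin
  set W₀ := LinearMap.range A.toLinearMap with hW₀
  set q : ↥W →L[ℝ] ↥W₀ := Submodule.orthogonalProjectionOnto W₀ with hq
  have hrA : finrank ℝ W₀ = r := hrank.self_of_nhds
  have hqmem : ∀ (w : ↥W) (hw : w ∈ W₀), q w = ⟨w, hw⟩ := fun w hw =>
    Submodule.orthogonalProjectionOnto_mem_subspace_eq_self (K := W₀) ⟨w, hw⟩
  have hKdim : finrank ℝ K + r = n := by
    have h1 := LinearMap.finrank_range_add_finrank_ker (A : EuclideanSpace ℝ (Fin n) →ₗ[ℝ] W)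
    have h3 : LinearMap.ker (A : EuclideanSpace ℝ (Fin n) →ₗ[ℝ] W) = K := rfl
    have h4 : LinearMap.range (A : EuclideanSpace ℝ (Fin n) →ₗ[ℝ] W) = W₀ := rfl
    rw [h3, h4, hrA, hEdim] at h1
    omega
  set T : EuclideanSpace ℝ (Fin n) →L[ℝ] ↥K × ↥W₀ :=
    (Submodule.orthogonalProjectionOnto K).prod (q.comp A) with hT
  have hTapp : ∀ v, T v = (Submodule.orthogonalProjectionOnto K v, q (A v)) := fun v => rfl
  have hTinj : Function.Injective T := by
    intro v v' hvv
    rw [← sub_eq_zero] at hvv ⊢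
    set u := v - v' with hu
    rw [← map_sub] at hvv
    have h1 : Submodule.orthogonalProjectionOnto K u = 0 := congrArg Prod.fst hvv
    have h2 : q (A u) = 0 := congrArg Prod.snd hvv
    have hAu : A u ∈ W₀ := LinearMap.mem_range.mpr ⟨u, rfl⟩
    have h5 : A u = 0 := by
      have h6 := hqmem (A u) hAu
      rw [h2] at h6
      simpa using (congrArg (fun z : ↥W₀ => (z : ↥W)) h6).symm
    have hu2 : u ∈ K := LinearMap.mem_ker.mpr h5
    have h7 := Submodule.orthogonalProjectionOnto_mem_subspace_eq_self (K := K) ⟨u, hu2⟩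
    rw [show ((⟨u, hu2⟩ : K) : EuclideanSpace ℝ (Fin n)) = u from rfl, h1] at h7
    simpa using (congrArg (fun z : ↥K => (z : EuclideanSpace ℝ (Fin n))) h7).symm
  have hdims : finrank ℝ (EuclideanSpace ℝ (Fin n)) = finrank ℝ (↥K × ↥W₀) := by
    rw [hEdim, finrank_prod, hrA]; omega
  set eL := LinearMap.linearEquivOfInjective
    (T : EuclideanSpace ℝ (Fin n) →ₗ[ℝ] ↥K × ↥W₀) (by exact hTinj) hdims with heL
  set e := eL.toContinuousLinearEquiv with he
  have heapp : ∀ v, e v = T v := by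
    intro v
    show eL v = T v
    rw [heL, LinearMap.linearEquivOfInjective_apply]
    rfl
  have heT : (e : EuclideanSpace ℝ (Fin n) →L[ℝ] ↥K × ↥W₀) = T :=
    ContinuousLinearMap.ext heapp
  have hed : e d = ((⟨d, hdK⟩ : ↥K), (0 : ↥W₀)) := by
    rw [heapp, hTapp]
    have hAd : A d = 0 := hdK
    have h1 : Submodule.orthogonalProjectionOnto K d = ⟨d, hdK⟩ :=
      Submodule.orthogonalProjectionOnto_mem_subspace_eq_self (K := K) ⟨d, hdK⟩
    rw [hAd, map_zero, h1]
  -- Step 3 : eventual kernel equality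
  have hkereq : ∀ᶠ x in nhds xb,
      LinearMap.ker (q.comp (Dh x)).toLinearMap = LinearMap.ker (Dh x).toLinearMap := by
    set Kp := Kᗮ with hKp
    have hKpdim : finrank ℝ Kp = r := by
      rw [hKp]
      have := Submodule.finrank_add_finrank_orthogonal (K := K)
      rw [hEdim] at this
      omega
    set M : EuclideanSpace ℝ (Fin n) → (↥Kp →L[ℝ] ↥W₀) :=
      fun x => (q.comp (Dh x)).comp Kp.subtypeL with hM
    have hMcont : Continuous M := by
      have hfd : Continuous (fun x => fderiv ℝ G x) := hG.continuous_fderiv (by norm_num)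
      rw [hM, hDhdef]
      exact (continuous_const.clm_comp (continuous_const.clm_comp hfd)).clm_comp continuous_const
    have hMinj : Function.Injective (M xb) := by
      intro v v' hvv
      rw [← sub_eq_zero] at hvv ⊢
      set u := v - v' with hu
      rw [← map_sub] at hvv
      have h2 : q (A u) = 0 := hvv
      have hAu : A (u : EuclideanSpace ℝ (Fin n)) ∈ W₀ := LinearMap.mem_range.mpr ⟨u, rfl⟩
      have h5 : A u = 0 := by
        have h6 := hqmem (A u) hAu
        rw [h2] at h6
        simpa using (congrArg (fun z : ↥W₀ => (z : ↥W)) h6).symm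
      have huK : (u : EuclideanSpace ℝ (Fin n)) ∈ K := LinearMap.mem_ker.mpr h5
      have huKp : (u : EuclideanSpace ℝ (Fin n)) ∈ Kp := u.2
      have : ((u : EuclideanSpace ℝ (Fin n))) = 0 := by
        have h8 := (Submodule.mem_orthogonal K (u : EuclideanSpace ℝ (Fin n))).mp huKp
          (u : EuclideanSpace ℝ (Fin n)) huK
        exact inner_self_eq_zero.mp h8
      exact Subtype.ext this
    have hMsurj : Function.Surjective (M xb) := by
      rintro ⟨w, hw⟩
      obtain ⟨u, rfl⟩ := LinearMap.mem_range.mp hw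
      refine ⟨Submodule.orthogonalProjectionOnto Kp u, ?_⟩
      have hdecomp : (Submodule.orthogonalProjectionOnto K u : EuclideanSpace ℝ (Fin n))
          + (Submodule.orthogonalProjectionOnto Kp u : EuclideanSpace ℝ (Fin n)) = u :=
        Submodule.starProjection_add_starProjection_orthogonal (K := K) u
      have hAK : A ((Submodule.orthogonalProjectionOnto K u : EuclideanSpace ℝ (Fin n))) = 0 :=
        LinearMap.mem_ker.mp (Submodule.orthogonalProjectionOnto K u).2
      have hAeq : A ((Submodule.orthogonalProjectionOnto Kp u : EuclideanSpace ℝ (Fin n))) = A u := by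
        conv_rhs => rw [← hdecomp]
        rw [map_add, hAK, zero_add]
      show q (A ((Submodule.orthogonalProjectionOnto Kp u : EuclideanSpace ℝ (Fin n)))) = _
      rw [hAeq]
      exact hqmem (A u) hw
    set e0L := LinearEquiv.ofBijective ((M xb) : ↥Kp →ₗ[ℝ] ↥W₀) ⟨hMinj, hMsurj⟩ with he0L
    set e0 := e0L.toContinuousLinearEquiv with he0
    set N : EuclideanSpace ℝ (Fin n) → (↥Kp →L[ℝ] ↥Kp) :=
      fun x => (e0.symm : ↥W₀ →L[ℝ] ↥Kp).comp (M x) with hN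
    have hNcont : Continuous N := continuous_const.clm_comp hMcont
    have hNxb : N xb = ContinuousLinearMap.id ℝ ↥Kp := by
      apply ContinuousLinearMap.ext
      intro v
      show e0.symm (M xb v) = v
      have : M xb v = e0 v := rfl
      rw [this, ContinuousLinearEquiv.symm_apply_apply]
    have hdet1 : (N xb).det = 1 := by
      rw [hNxb]
      show LinearMap.det ((ContinuousLinearMap.id ℝ ↥Kp : ↥Kp →ₗ[ℝ] ↥Kp)) = 1
      rw [ContinuousLinearMap.coe_id, LinearMap.det_id]
    have hdetcont : Continuous fun x => (N x).det :=
      ContinuousLinearMap.continuous_det.comp hNcont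
    have hdetne : ∀ᶠ x in nhds xb, (N x).det ≠ 0 := by
      have hca : ContinuousAt (fun x => (N x).det) xb := hdetcont.continuousAt
      have h0 : (N xb).det ≠ 0 := by rw [hdet1]; norm_num
      exact hca.eventually_ne h0
    filter_upwards [hrank, hdetne] with x hx hdx
    have hNx : Function.Surjective (N x) := by
      have hsur := (LinearMap.equivOfDetNeZero ((N x) : ↥Kp →ₗ[ℝ] ↥Kp) hdx).surjective
      intro w
      obtain ⟨v, hv⟩ := hsur w
      exact ⟨v, hv⟩
    have hMxsurj : Function.Surjective (M x) := by
      intro w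
      obtain ⟨v, hv⟩ := hNx (e0.symm w)
      refine ⟨v, ?_⟩
      have : e0.symm (M x v) = e0.symm w := hv
      exact e0.symm.injective this
    have hqDhsurj : Function.Surjective (q.comp (Dh x)) := by
      intro w
      obtain ⟨v, hv⟩ := hMxsurj w
      exact ⟨(v : EuclideanSpace ℝ (Fin n)), hv⟩
    have hle : LinearMap.ker (Dh x).toLinearMap ≤ LinearMap.ker (q.comp (Dh x)).toLinearMap := by
      intro v hv
      rw [LinearMap.mem_ker] at hv ⊢
      show q (Dh x v) = 0
      rw [show Dh x v = 0 from hv, map_zero]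
    have hrk1 : finrank ℝ (LinearMap.ker (Dh x).toLinearMap) = n - r := by
      have h1 := LinearMap.finrank_range_add_finrank_ker
        ((Dh x) : EuclideanSpace ℝ (Fin n) →ₗ[ℝ] W)
      have h3 : LinearMap.ker ((Dh x) : EuclideanSpace ℝ (Fin n) →ₗ[ℝ] W)
          = LinearMap.ker (Dh x).toLinearMap := rfl
      have h4 : LinearMap.range ((Dh x) : EuclideanSpace ℝ (Fin n) →ₗ[ℝ] W)
          = LinearMap.range (Dh x).toLinearMap := rfl
      rw [h3, h4, hx, hEdim] at h1
      omega
    have hrk2 : finrank ℝ (LinearMap.ker (q.comp (Dh x)).toLinearMap) = n - r := by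
      have h1 := LinearMap.finrank_range_add_finrank_ker
        ((q.comp (Dh x)) : EuclideanSpace ℝ (Fin n) →ₗ[ℝ] W₀)
      have h3 : LinearMap.ker ((q.comp (Dh x)) : EuclideanSpace ℝ (Fin n) →ₗ[ℝ] W₀)
          = LinearMap.ker (q.comp (Dh x)).toLinearMap := rfl
      have h4 : LinearMap.range ((q.comp (Dh x)) : EuclideanSpace ℝ (Fin n) →ₗ[ℝ] W₀)
          = LinearMap.range (q.comp (Dh x)).toLinearMap := rfl
      have h5 : LinearMap.range (q.comp (Dh x)).toLinearMap = ⊤ := LinearMap.range_eq_top.mpr hqDhsurj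
      rw [h3, h4, h5, hEdim] at h1
      have h6 : finrank ℝ (⊤ : Submodule ℝ ↥W₀) = r := by rw [finrank_top]; exact hrA
      rw [h6] at h1
      omega
    exact (Submodule.eq_of_le_of_finrank_le hle (by omega)).symm
  -- Step 4 : inverse function theorem
  set Fm : EuclideanSpace ℝ (Fin n) → ↥K × ↥W₀ :=
    fun x => (Submodule.orthogonalProjectionOnto K x, q (h x)) with hFm
  have hFmC : ContDiff ℝ 2 Fm :=
    ContDiff.prodMk ((Submodule.orthogonalProjectionOnto K).contDiff) (q.contDiff.comp hhC)
  have hFmD : ∀ x, HasFDerivAt Fm ((Submodule.orthogonalProjectionOnto K).prod (q.comp (Dh x))) x :=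
    fun x => HasFDerivAt.prodMk ((Submodule.orthogonalProjectionOnto K).hasFDerivAt) ((q.hasFDerivAt).comp x (hDh x))
  have hFd : HasFDerivAt Fm (e : EuclideanSpace ℝ (Fin n) →L[ℝ] ↥K × ↥W₀) xb := by
    rw [heT, hT]
    exact hFmD xb
  have hn2 : (1 : WithTop ℕ∞) ≤ 2 := by norm_num
  set S := (hFmC.contDiffAt).hasStrictFDerivAt' hFd (by norm_num) with hS
  set Finv : ↥K × ↥W₀ → EuclideanSpace ℝ (Fin n) := S.localInverse Fm e xb with hFinvdef
  have hFinv0 : Finv (Fm xb) = xb := S.localInverse_apply_image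
  have hFinvsm : ContDiffAt ℝ 2 Finv (Fm xb) := (hFmC.contDiffAt).to_localInverse hFd (by norm_num)
  have hFinvD : HasFDerivAt Finv
      ((e.symm : ↥K × ↥W₀ →L[ℝ] EuclideanSpace ℝ (Fin n))) (Fm xb) :=
    S.to_localInverse.hasFDerivAt
  have hri : ∀ᶠ y in nhds (Fm xb), Fm (Finv y) = y := S.eventually_right_inverse
  -- the curve
  set vd : ↥K × ↥W₀ := ((⟨d, hdK⟩ : ↥K), (0 : ↥W₀)) with hvd
  set c : ℝ → ↥K × ↥W₀ := fun t => Fm xb + t • vd with hc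
  have hcsm : ContDiff ℝ 2 c := contDiff_const.add (contDiff_id.smul contDiff_const)
  have hcD : ∀ t, HasDerivAt c vd t := by
    intro t
    have h1 : HasDerivAt (fun s : ℝ => s • vd) vd t := by
      simpa using (hasDerivAt_id t).smul_const vd
    exact h1.const_add (Fm xb)
  have hc0 : c 0 = Fm xb := by rw [hc]; simp
  have h2ne : (2 : WithTop ℕ∞) ≠ ((⊤ : ℕ∞) : WithTop ℕ∞) := by norm_num
  have hgood : ∀ᶠ y in nhds (Fm xb),
      Fm (Finv y) = y ∧ ContDiffAt ℝ 2 Finv y ∧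
        LinearMap.ker (q.comp (Dh (Finv y))).toLinearMap = LinearMap.ker (Dh (Finv y)).toLinearMap := by
    have hcont : ContinuousAt Finv (Fm xb) := hFinvsm.continuousAt
    have h3 : ∀ᶠ y in nhds (Fm xb),
        LinearMap.ker (q.comp (Dh (Finv y))).toLinearMap = LinearMap.ker (Dh (Finv y)).toLinearMap := by
      have h4 := hcont.tendsto
      rw [hFinv0] at h4
      exact h4.eventually hkereq
    filter_upwards [hri, hFinvsm.eventually h2ne, h3] with y h1 h2 h3
    exact ⟨h1, h2, h3⟩
  have hgt : ∀ᶠ t in nhds (0:ℝ), Fm (Finv (c t)) = c t ∧ ContDiffAt ℝ 2 Finv (c t) ∧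
      LinearMap.ker (q.comp (Dh (Finv (c t)))).toLinearMap = LinearMap.ker (Dh (Finv (c t))).toLinearMap := by
    have h4 : Filter.Tendsto c (nhds 0) (nhds (Fm xb)) := by
      rw [← hc0]
      exact hcsm.continuous.continuousAt
    exact h4.eventually hgood
  rw [Metric.eventually_nhds_iff_ball] at hgt
  obtain ⟨ε, hε, hball⟩ := hgt
  have hmem : ∀ t ∈ Set.Ioo (-ε) ε, t ∈ Metric.ball (0:ℝ) ε := by
    intro t ht
    rw [Real.ball_eq_Ioo]
    simpa using ht
  set ξ : ℝ → EuclideanSpace ℝ (Fin n) := fun t => Finv (c t) with hξ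
  have hξ0 : ξ 0 = xb := by rw [hξ]; show Finv (c 0) = xb; rw [hc0, hFinv0]
  -- q-component is constant along the curve
  have hsnd : ∀ s ∈ Set.Ioo (-ε) ε, q (h (ξ s)) = q (h xb) := by
    intro s hs
    have hp := hball s (hmem s hs)
    have h1 : Fm (ξ s) = c s := hp.1
    have h2 := congrArg Prod.snd h1
    simpa [hFm, hc, hvd] using h2
  -- the derivative of h ∘ ξ vanishes on the interval
  have hderiv0 : ∀ s ∈ Set.Ioo (-ε) ε, HasDerivAt (fun u => h (ξ u)) 0 s := by
    intro s hs
    have hp := hball s (hmem s hs)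
    have hξs : ContDiffAt ℝ 2 ξ s := hp.2.1.comp s hcsm.contDiffAt
    have hξd : HasDerivAt ξ (deriv ξ s) s := (hξs.differentiableAt (by norm_num)).hasDerivAt
    have hgd : HasDerivAt (fun u => h (ξ u)) (Dh (ξ s) (deriv ξ s)) s :=
      (hDh (ξ s)).comp_hasDerivAt s hξd
    have hqd : HasDerivAt (fun u => q (h (ξ u))) (q (Dh (ξ s) (deriv ξ s))) s :=
      (q.hasFDerivAt).comp_hasDerivAt s hgd
    have hIop : Set.Ioo (-ε) ε ∈ nhds s := isOpen_Ioo.mem_nhds hs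
    have hconst : HasDerivAt (fun u => q (h (ξ u))) 0 s := by
      have heq : (fun u => q (h (ξ u))) =ᶠ[nhds s] fun _ => q (h xb) := by
        filter_upwards [hIop] with u hu using hsnd u hu
      exact (hasDerivAt_const s (q (h xb))).congr_of_eventuallyEq heq
    have hq0 : q (Dh (ξ s) (deriv ξ s)) = 0 := hqd.unique hconst
    have hmemker : deriv ξ s ∈ LinearMap.ker (q.comp (Dh (ξ s))).toLinearMap := by
      rw [LinearMap.mem_ker]
      exact hq0
    rw [hp.2.2] at hmemker
    have hz : Dh (ξ s) (deriv ξ s) = 0 := hmemker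
    rw [hz] at hgd
    exact hgd
  -- h ∘ ξ is constant on the interval
  have hconst2 : ∀ s ∈ Set.Ioo (-ε) ε, h (ξ s) = h xb := by
    intro s hs
    have h0I : (0:ℝ) ∈ Set.Ioo (-ε) ε := by constructor <;> simp [hε]
    have := Convex.is_const_of_fderivWithin_eq_zero (𝕜 := ℝ) (convex_Ioo (-ε) ε)
      (f := fun u => h (ξ u)) ?_ ?_ hs h0I
    · rw [← hξ0]; exact this
    · intro z hz
      exact ((hderiv0 z hz).differentiableAt).differentiableWithinAt
    · intro z hz
      have hF : HasFDerivAt (fun u => h (ξ u))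
          (ContinuousLinearMap.smulRight (1 : ℝ →L[ℝ] ℝ) (0 : ↥W)) z := hderiv0 z hz
      rw [fderivWithin_of_isOpen isOpen_Ioo hz, hF.fderiv]
      ext
      simp
  refine ⟨ε, hε, ξ, ?_, hξ0, ?_, ?_⟩
  · -- smoothness
    intro t ht
    have hp := hball t (hmem t ht)
    exact (hp.2.1.comp t hcsm.contDiffAt).contDiffWithinAt
  · -- derivative at 0
    have h1 : HasFDerivAt Finv
        ((e.symm : ↥K × ↥W₀ →L[ℝ] EuclideanSpace ℝ (Fin n))) (c 0) := by
      rw [hc0]; exact hFinvD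
    have hD : HasDerivAt ξ ((e.symm : ↥K × ↥W₀ →L[ℝ] EuclideanSpace ℝ (Fin n)) vd) 0 :=
      h1.comp_hasDerivAt 0 (hcD 0)
    have h2 : (e.symm : ↥K × ↥W₀ →L[ℝ] EuclideanSpace ℝ (Fin n)) vd = d := by
      show e.symm vd = d
      rw [← hed, ContinuousLinearEquiv.symm_apply_apply]
    rw [h2] at hD
    exact hD.deriv
  · -- the inner products
    intro t ht V hV
    have hhv : h (ξ t) = h xb := hconst2 t ht
    have key : ∀ y, ⟪G y, V⟫ = ⟪((h y : W) : 𝔽), V⟫ := by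
      intro y
      have h1 : ⟪G y - ((h y : W) : 𝔽), V⟫ = 0 :=
        Submodule.starProjection_inner_eq_zero (K := W) (G y) V hV
      rw [inner_sub_left] at h1
      linarith
    rw [key (ξ t), key xb, hhv]
end

section
/- Let A : ℝⁿ → 𝔽 be a linear map, let C ⊆ 𝔽 be a nonempty closed convex cone, and let F be the minimal face of C containing the set A[A⁻¹(C)] = {Ad : d ∈ ℝⁿ, Ad ∈ C}. Then there exists d ∈ ℝⁿ with Ad ∈ C such that Ad ∈ ri(F). -/
open Set

/-- A face of a closed convex set `C`: a convex subset that is extreme in `C`. -/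
def IsFace {𝔽 : Type*} [NormedAddCommGroup 𝔽] [InnerProductSpace ℝ 𝔽]
    (C F : Set 𝔽) : Prop :=
  Convex ℝ F ∧ IsExtreme ℝ C F

/-- `F` is the minimal face of `C` containing `S`. -/
def IsMinimalFace {𝔽 : Type*} [NormedAddCommGroup 𝔽] [InnerProductSpace ℝ 𝔽]
    (C S F : Set 𝔽) : Prop :=
  IsFace C F ∧ S ⊆ F ∧ ∀ F' : Set 𝔽, IsFace C F' → S ⊆ F' → F ⊆ F'

section Aux

variable {𝔽 : Type*} [NormedAddCommGroup 𝔽] [NormedSpace ℝ 𝔽]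

/-- metric characterization of the intrinsic interior -/
lemma mem_intrinsicInterior_iff' {s : Set 𝔽} {x : 𝔽} :
    x ∈ intrinsicInterior ℝ s ↔ x ∈ affineSpan ℝ s ∧
      ∃ ε > (0:ℝ), ∀ z ∈ (affineSpan ℝ s : Set 𝔽), dist z x < ε → z ∈ s := by
  constructor
  · rintro ⟨y, hy, rfl⟩
    refine ⟨y.2, ?_⟩
    rw [mem_interior_iff_mem_nhds, Metric.mem_nhds_iff] at hy
    obtain ⟨ε, hε, hball⟩ := hy
    refine ⟨ε, hε, fun z hz hd => ?_⟩
    exact hball (show (⟨z, hz⟩ : affineSpan ℝ s) ∈ Metric.ball y ε by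
      simpa [Metric.mem_ball, Subtype.dist_eq] using hd)
  · rintro ⟨hx, ε, hε, h⟩
    refine ⟨⟨x, hx⟩, ?_, rfl⟩
    rw [mem_interior_iff_mem_nhds, Metric.mem_nhds_iff]
    exact ⟨ε, hε, fun z hz => h z z.2 (by simpa [Metric.mem_ball, Subtype.dist_eq] using hz)⟩

/-- extension: from any point of `s`, the segment through a relative interior point
extends a bit further inside `s`. -/
lemma exists_extension {s : Set 𝔽} {x y : 𝔽}
    (hx : x ∈ intrinsicInterior ℝ s) (hy : y ∈ s) :
    ∃ δ > (0:ℝ), x + δ • (x - y) ∈ s := by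
  rw [mem_intrinsicInterior_iff'] at hx
  obtain ⟨hxs, ε, hε, hball⟩ := hx
  set δ : ℝ := ε / (‖x - y‖ + 1) with hδ
  have hnorm : (0:ℝ) < ‖x - y‖ + 1 := by positivity
  have hδ0 : 0 < δ := by positivity
  refine ⟨δ, hδ0, ?_⟩
  have hyspan : y ∈ affineSpan ℝ s := subset_affineSpan ℝ s hy
  have hzspan : x + δ • (x - y) ∈ affineSpan ℝ s := by
    have := AffineSubspace.smul_vsub_vadd_mem (affineSpan ℝ s) δ hxs hyspan hxs
    simpa [vsub_eq_sub, vadd_eq_add, add_comm] using this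
  refine hball _ hzspan ?_
  have : dist (x + δ • (x - y)) x = δ * ‖x - y‖ := by
    rw [dist_eq_norm]
    simp [norm_smul, abs_of_pos hδ0]
  rw [this, hδ]
  calc ε / (‖x - y‖ + 1) * ‖x - y‖ < ε / (‖x - y‖ + 1) * (‖x - y‖ + 1) := by
        apply mul_lt_mul_of_pos_left (by linarith) (by positivity)
    _ = ε := div_mul_cancel₀ ε (ne_of_gt hnorm)

/-- a convex combination (with positive weight on the interior point) of a relative
interior point and a point of `s` is in the relative interior. -/
lemma combo_mem_intrinsicInterior {s : Set 𝔽} (hs : Convex ℝ s) {x z : 𝔽}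
    (hx : x ∈ intrinsicInterior ℝ s) (hz : z ∈ s) {t : ℝ} (ht0 : 0 < t) (ht1 : t ≤ 1) :
    t • x + (1 - t) • z ∈ intrinsicInterior ℝ s := by
  rw [mem_intrinsicInterior_iff'] at hx ⊢
  obtain ⟨hxs, ε, hε, hball⟩ := hx
  have hzspan : z ∈ affineSpan ℝ s := subset_affineSpan ℝ s hz
  have hwspan : t • x + (1 - t) • z ∈ affineSpan ℝ s := by
    have := AffineSubspace.smul_vsub_vadd_mem (affineSpan ℝ s) t hxs hzspan hzspan
    have h2 : t • (x - z) + z = t • x + (1 - t) • z := by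
      simp [smul_sub, sub_smul]; abel
    simpa [vsub_eq_sub, vadd_eq_add, h2] using this
  refine ⟨hwspan, t * ε, by positivity, fun u hu hdu => ?_⟩
  set w := t • x + (1 - t) • z with hw
  set v := t⁻¹ • (u - w) + x with hv
  have hvspan : v ∈ affineSpan ℝ s := by
    have := AffineSubspace.smul_vsub_vadd_mem (affineSpan ℝ s) t⁻¹ hu hwspan hxs
    simpa [vsub_eq_sub, vadd_eq_add, hv] using this
  have hvs : v ∈ s := by
    refine hball _ hvspan ?_
    have : dist v x = t⁻¹ * ‖u - w‖ := by
      rw [dist_eq_norm]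
      have h3 : v - x = t⁻¹ • (u - w) := by rw [hv]; abel
      rw [h3, norm_smul, Real.norm_eq_abs, abs_of_pos (inv_pos.2 ht0)]
    rw [this]
    rw [dist_eq_norm] at hdu
    calc t⁻¹ * ‖u - w‖ < t⁻¹ * (t * ε) := by
          exact mul_lt_mul_of_pos_left hdu (inv_pos.2 ht0)
      _ = ε := by field_simp
  have key : u = t • v + (1 - t) • z := by
    rw [hv, smul_add, smul_smul, mul_inv_cancel₀ (ne_of_gt ht0), one_smul, hw]
    abel
  rw [key]
  exact hs hvs hz (le_of_lt ht0) (by linarith) (by ring)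

/-- shrinking the extension parameter keeps membership, by convexity. -/
lemma shrink_ext {C : Set 𝔽} (hC : Convex ℝ C) {x y : 𝔽} (hxC : x ∈ C)
    {ε δ : ℝ} (hδ : 0 < δ) (hδε : δ ≤ ε) (hp : x + ε • (x - y) ∈ C) :
    x + δ • (x - y) ∈ C := by
  have hε : 0 < ε := lt_of_lt_of_le hδ hδε
  have key : x + δ • (x - y) = (δ/ε) • (x + ε • (x - y)) + (1 - δ/ε) • x := by
    match_scalars <;> field_simp <;> ring
  rw [key]
  exact hC hp hxC (by positivity) (by rw [sub_nonneg]; exact div_le_one_of_le₀ hδε hε.le)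
    (by ring)

/-- half of the extremeness proof for the set `G`. -/
lemma ext_half {C : Set 𝔽} (hC : Convex ℝ C) {x y z w : 𝔽} (hwC : w ∈ C)
    {a b ε : ℝ} (ha : 0 < a) (hb : 0 < b) (hab : a + b = 1) (hε : 0 < ε)
    (hy : a • z + b • w = y) (hp : x + ε • (x - y) ∈ C) :
    ∃ δ > (0:ℝ), x + δ • (x - z) ∈ C := by
  have h1 : (0:ℝ) < 1 + ε * b := by positivity
  refine ⟨ε * a / (1 + ε * b), by positivity, ?_⟩
  have hb' : b = 1 - a := by linarith
  subst hb' hy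
  have key : x + (ε * a / (1 + ε * (1 - a))) • (x - z)
      = (1 - ε * (1 - a) / (1 + ε * (1 - a))) • (x + ε • (x - (a • z + (1 - a) • w)))
        + (ε * (1 - a) / (1 + ε * (1 - a))) • w := by
    match_scalars <;> field_simp <;> ring
  rw [key]
  have hs0 : 0 ≤ ε * (1 - a) / (1 + ε * (1 - a)) := by positivity
  have hs1 : ε * (1 - a) / (1 + ε * (1 - a)) ≤ 1 := by
    rw [div_le_one h1]; linarith
  exact hC hp hwC (by linarith) hs0 (by ring)

/-- `x` lies on the open segment between `y` and `x + ε • (x - y)`. -/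
lemma mem_openSegment_ext {x y : 𝔽} {ε : ℝ} (hε : 0 < ε) :
    x ∈ openSegment ℝ y (x + ε • (x - y)) := by
  have h1 : (0:ℝ) < 1 + ε := by positivity
  refine ⟨ε / (1 + ε), 1 / (1 + ε), by positivity, by positivity, ?_, ?_⟩
  · field_simp
    ring
  · match_scalars <;> field_simp <;> ring



end Aux

theorem stmt_4 {n : ℕ} {𝔽 : Type*} [NormedAddCommGroup 𝔽] [InnerProductSpace ℝ 𝔽]
    [FiniteDimensional ℝ 𝔽]
    (A : EuclideanSpace ℝ (Fin n) →ₗ[ℝ] 𝔽)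
    (C : Set 𝔽) (hCne : C.Nonempty) (hCcl : IsClosed C) (hCconv : Convex ℝ C)
    (hCcone : ∀ c : ℝ, 0 ≤ c → ∀ x ∈ C, c • x ∈ C)
    (F : Set 𝔽) (hF : IsMinimalFace C (A '' (A ⁻¹' C)) F) :
    ∃ d : EuclideanSpace ℝ (Fin n), A d ∈ C ∧ A d ∈ intrinsicInterior ℝ F := by
  obtain ⟨hFface, hSF, hmin⟩ := hF
  set S : Set 𝔽 := A '' (A ⁻¹' C) with hS
  have hSsubC : S ⊆ C := by rintro _ ⟨d, hd, rfl⟩; exact hd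
  have h0C : (0:𝔽) ∈ C := by
    obtain ⟨c0, hc0⟩ := hCne
    simpa using hCcone 0 le_rfl c0 hc0
  have hSne : S.Nonempty := ⟨0, 0, by simpa using h0C, by simp⟩
  have hSconv : Convex ℝ S := by
    have hseq : S = C ∩ Set.range A := by rw [hS, Set.image_preimage_eq_inter_range]
    rw [hseq]
    have : Convex ℝ (LinearMap.range A : Set 𝔽) := (LinearMap.range A).convex
    rw [LinearMap.coe_range] at this
    exact hCconv.inter this
  obtain ⟨x, hxri⟩ := hSne.intrinsicInterior hSconv
  have hxS : x ∈ S := intrinsicInterior_subset hxri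
  have hxC : x ∈ C := hSsubC hxS
  obtain ⟨d, hdC, hdx⟩ := hxS
  -- the candidate minimal face containing x
  set G : Set 𝔽 := {y | y ∈ C ∧ ∃ ε > (0:ℝ), x + ε • (x - y) ∈ C} with hG
  have hGsubC : G ⊆ C := fun y hy => hy.1
  -- G is convex
  have hGconv : Convex ℝ G := by
    rintro y₁ ⟨hy₁C, ε₁, hε₁, hp₁⟩ y₂ ⟨hy₂C, ε₂, hε₂, hp₂⟩ a b ha hb hab
    refine ⟨hCconv hy₁C hy₂C ha hb hab, min ε₁ ε₂, lt_min hε₁ hε₂, ?_⟩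
    have h1 : x + (min ε₁ ε₂) • (x - y₁) ∈ C :=
      shrink_ext hCconv hxC (lt_min hε₁ hε₂) (min_le_left _ _) hp₁
    have h2 : x + (min ε₁ ε₂) • (x - y₂) ∈ C :=
      shrink_ext hCconv hxC (lt_min hε₁ hε₂) (min_le_right _ _) hp₂
    have hb' : b = 1 - a := by linarith
    subst hb'
    have key : x + (min ε₁ ε₂) • (x - (a • y₁ + (1 - a) • y₂))
        = a • (x + (min ε₁ ε₂) • (x - y₁)) + (1 - a) • (x + (min ε₁ ε₂) • (x - y₂)) := by
      match_scalars <;> ring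
    rw [key]
    exact hCconv h1 h2 ha (by linarith) (by ring)
  -- G is extreme in C
  have hGext : IsExtreme ℝ C G := by
    refine ⟨hGsubC, ?_⟩
    rintro x₁ hx₁ x₂ hx₂ y ⟨hyC, ε, hε, hp⟩ ⟨a, b, ha, hb, hab, hy⟩
    · obtain ⟨δ, hδ, hq⟩ := ext_half hCconv hx₂ ha hb hab hε hy hp
      exact ⟨hx₁, δ, hδ, hq⟩
  -- S ⊆ G
  have hSG : S ⊆ G := by
    intro y hyS
    obtain ⟨δ, hδ, hys⟩ := exists_extension hxri hyS
    exact ⟨hSsubC hyS, δ, hδ, hSsubC hys⟩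
  -- F ⊆ G by minimality
  have hFG : F ⊆ G := hmin G ⟨hGconv, hGext⟩ hSG
  have hxF : x ∈ F := hSF ⟨d, hdC, hdx⟩
  -- pick a relative interior point of F
  have hFconv : Convex ℝ F := hFface.1
  obtain ⟨w, hwri⟩ := Set.Nonempty.intrinsicInterior hFconv ⟨x, hxF⟩
  have hwF : w ∈ F := intrinsicInterior_subset hwri
  obtain ⟨hwC, ε, hε, hp⟩ := hFG hwF
  -- the extension point is in F by extremeness
  have hpF : x + ε • (x - w) ∈ F :=
    hFface.2.2 hp hwC hxF (by rw [openSegment_symm]; exact mem_openSegment_ext hε)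
  -- x is a convex combination of w (relative interior) and the extension point
  have h1 : (0:ℝ) < 1 + ε := by positivity
  have ht0 : (0:ℝ) < ε / (1 + ε) := by positivity
  have ht1 : ε / (1 + ε) ≤ 1 := by rw [div_le_one h1]; linarith
  have hcombo := combo_mem_intrinsicInterior hFconv hwri hpF ht0 ht1
  have hxeq : (ε / (1 + ε)) • w + (1 - ε / (1 + ε)) • (x + ε • (x - w)) = x := by
    match_scalars <;> field_simp <;> ring
  rw [hxeq] at hcombo
  exact ⟨d, hdC, by rwa [hdx]⟩
end

section
/- Let f : ℝⁿ → ℝ and G : ℝⁿ → 𝔽 be twice continuously differentiable, C ⊆ 𝔽 a nonempty closed convex cone, x̄ ∈ ℝⁿ with G(x̄) = 0. Let F be the minimal face of C containing Γ = DG(x̄)[L(x̄)], where L(x̄) = {d ∈ ℝⁿ : DG(x̄)d ∈ C}. Assume there is a neighborhood V of x̄ such that for every face F′ of C with F′ ⊆ F, the dimension of DG(x)*[F′⊥] is the same for all x ∈ V (Strong-CRSC). Then for every d ∈ ℝⁿ with DG(x̄)d ∈ C and ⟨∇f(x̄), d⟩ = 0, and any two multipliers Ȳ₁, Ȳ₂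 ∈ C° satisfying −∇f(x̄) = DG(x̄)*[Ȳ₁] = DG(x̄)*[Ȳ₂], one has ⟨D²G(x̄)[d, d], Ȳ₁⟩ = ⟨D²G(x̄)[d, d], Ȳ₂⟩; that is, the second-order term is independent of the choice of Lagrange multiplier. -/
open Set Module RealInnerProductSpace

/-- The polar cone of `C`. -/
def polarCone {𝔽 : Type*} [NormedAddCommGroup 𝔽] [InnerProductSpace ℝ 𝔽]
    (C : Set 𝔽) : Set 𝔽 :=
  {y | ∀ x ∈ C, ⟪y, x⟫ ≤ (0 : ℝ)}

section Aux

open Filter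

variable {E : Type*} [NormedAddCommGroup E] [InnerProductSpace ℝ E]

lemma gram_mulVec {r : ℕ} (v : Fin r → E) (c : Fin r → ℝ) (i : Fin r) :
    (Matrix.of fun i j => (⟪v i, v j⟫ : ℝ)).mulVec c i = ⟪v i, ∑ j, c j • v j⟫ := by
  simp [Matrix.mulVec, dotProduct, inner_sum, real_inner_smul_right, mul_comm]

lemma gram_det_ne_zero {r : ℕ} {v : Fin r → E} (hv : LinearIndependent ℝ v) :
    (Matrix.of fun i j => (⟪v i, v j⟫ : ℝ)).det ≠ 0 := by
  intro h0
  obtain ⟨c, hc0, hc⟩ := Matrix.exists_mulVec_eq_zero_iff.mpr h0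
  have hs : (∑ j, c j • v j) = 0 := by
    rw [← inner_self_eq_zero (𝕜 := ℝ)]
    rw [sum_inner]
    have : ∀ i, ⟪v i, ∑ j, c j • v j⟫ = (0:ℝ) := by
      intro i
      rw [← gram_mulVec v c i, hc]
      rfl
    simp [real_inner_smul_left, this]
  exact hc0 (funext (Fintype.linearIndependent_iff.mp hv c hs))

lemma linearIndependent_of_gram_det {r : ℕ} {v : Fin r → E}
    (h : (Matrix.of fun i j => (⟪v i, v j⟫ : ℝ)).det ≠ 0) : LinearIndependent ℝ v := by
  rw [Fintype.linearIndependent_iff]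
  intro c hc
  have hmv : (Matrix.of fun i j => (⟪v i, v j⟫ : ℝ)).mulVec c = 0 := by
    funext i
    rw [gram_mulVec v c i, hc, inner_zero_right]; rfl
  intro i
  have hu : IsUnit (Matrix.of fun i j => (⟪v i, v j⟫ : ℝ)).det := isUnit_iff_ne_zero.mpr h
  have h2 : (Matrix.of fun i j => (⟪v i, v j⟫ : ℝ))⁻¹.mulVec
      ((Matrix.of fun i j => (⟪v i, v j⟫ : ℝ)).mulVec c) = 0 := by
    rw [hmv, Matrix.mulVec_zero]
  rw [Matrix.mulVec_mulVec, Matrix.nonsing_inv_mul _ hu, Matrix.one_mulVec] at h2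
  exact congrFun h2 i

lemma coeff_eq {r : ℕ} {v : Fin r → E} (h : (Matrix.of fun i j => (⟪v i, v j⟫ : ℝ)).det ≠ 0)
    {a : Fin r → ℝ} {u : E} (hu : (∑ j, a j • v j) = u) :
    a = (Matrix.of fun i j => (⟪v i, v j⟫ : ℝ))⁻¹.mulVec (fun j => ⟪v j, u⟫) := by
  have hu' : (Matrix.of fun i j => (⟪v i, v j⟫ : ℝ)).mulVec a = fun j => (⟪v j, u⟫:ℝ) := by
    funext i; rw [gram_mulVec v a i, hu]
  have hunit : IsUnit (Matrix.of fun i j => (⟪v i, v j⟫ : ℝ)).det := isUnit_iff_ne_zero.mpr h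
  rw [← hu', Matrix.mulVec_mulVec, Matrix.nonsing_inv_mul _ hunit, Matrix.one_mulVec]

lemma face_inter_polar (C : Set E) (hCconv : Convex ℝ C) (Y : E) (hY : Y ∈ polarCone C) :
    IsFace C {u | u ∈ C ∧ ⟪Y, u⟫ = (0:ℝ)} := by
  constructor
  · intro x hx y hy a b ha hb hab
    refine ⟨hCconv hx.1 hy.1 ha hb hab, ?_⟩
    rw [inner_add_right, real_inner_smul_right, real_inner_smul_right, hx.2, hy.2]
    ring
  · constructor
    · exact fun u hu => hu.1
    · rintro x₁ hx₁ x₂ hx₂ x hx hseg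
      obtain ⟨a, b, ha, hb, hab, rfl⟩ := hseg
      have h1 : (⟪Y, x₁⟫ : ℝ) ≤ 0 := hY x₁ hx₁
      have h2 : (⟪Y, x₂⟫ : ℝ) ≤ 0 := hY x₂ hx₂
      have h0 : a * ⟪Y, x₁⟫ + b * ⟪Y, x₂⟫ = (0:ℝ) := by
        have := hx.2
        rwa [inner_add_right, real_inner_smul_right, real_inner_smul_right] at this
      have e1 : (⟪Y, x₁⟫ : ℝ) = 0 := by nlinarith
      have e2 : (⟪Y, x₂⟫ : ℝ) = 0 := by nlinarith
      exact ⟨hx₁, e1⟩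

lemma key {n : ℕ} {𝔽 : Type*} [NormedAddCommGroup 𝔽] [InnerProductSpace ℝ 𝔽]
    [FiniteDimensional ℝ 𝔽]
    (G : EuclideanSpace ℝ (Fin n) → 𝔽) (hG : ContDiff ℝ 2 G)
    (xb d : EuclideanSpace ℝ (Fin n)) (W : Submodule ℝ 𝔽)
    (V : Set (EuclideanSpace ℝ (Fin n))) (hV : V ∈ nhds xb)
    (r : ℕ)
    (hr : ∀ x ∈ V, finrank ℝ
      ↥(W.map (ContinuousLinearMap.adjoint (fderiv ℝ G x)).toLinearMap) = r)
    (Y : 𝔽) (hYW : Y ∈ W)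
    (hAY : ContinuousLinearMap.adjoint (fderiv ℝ G xb) Y = 0)
    (hWd : ∀ w ∈ W, ⟪w, fderiv ℝ G xb d⟫ = (0 : ℝ)) :
    ⟪Y, fderiv ℝ (fderiv ℝ G) xb d d⟫ = (0 : ℝ) := by
  classical
  set 𝒜 : EuclideanSpace ℝ (Fin n) → (𝔽 →L[ℝ] EuclideanSpace ℝ (Fin n)) :=
    fun x => ContinuousLinearMap.adjoint (fderiv ℝ G x) with h𝒜
  set S : EuclideanSpace ℝ (Fin n) → Submodule ℝ (EuclideanSpace ℝ (Fin n)) :=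
    fun x => W.map (𝒜 x).toLinearMap with hS
  have hxbV : xb ∈ V := mem_of_mem_nhds hV
  -- choose preimages of a basis of S xb
  have hSfr : finrank ℝ (S xb) = r := hr xb hxbV
  let b : Basis (Fin r) ℝ (S xb) := finBasisOfFinrankEq ℝ (S xb) hSfr
  have hbmem : ∀ i, ∃ u, u ∈ W ∧ 𝒜 xb u = (b i : EuclideanSpace ℝ (Fin n)) := by
    intro i
    exact Submodule.mem_map.mp (b i).2
  choose w hwW hwb using hbmem
  set v : EuclideanSpace ℝ (Fin n) → Fin r → EuclideanSpace ℝ (Fin n) :=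
    fun x i => 𝒜 x (w i) with hv
  -- continuity
  have hDG : ContDiff ℝ 1 (fun x => fderiv ℝ G x) := hG.fderiv_right (by norm_num)
  have hAcont : Continuous 𝒜 := by
    have : Continuous fun T : EuclideanSpace ℝ (Fin n) →L[ℝ] 𝔽 =>
        ContinuousLinearMap.adjoint T := (ContinuousLinearMap.adjoint (𝕜 := ℝ)
      (E := EuclideanSpace ℝ (Fin n)) (F := 𝔽)).continuous
    exact this.comp hDG.continuous
  have hvcont : ∀ i, Continuous fun x => v x i := by
    intro i
    exact (ContinuousLinearMap.apply ℝ (EuclideanSpace ℝ (Fin n)) (w i)).continuous.comp hAcont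
  have hAYcont : Continuous fun x => 𝒜 x Y :=
    (ContinuousLinearMap.apply ℝ (EuclideanSpace ℝ (Fin n)) Y).continuous.comp hAcont
  set Gm : EuclideanSpace ℝ (Fin n) → Matrix (Fin r) (Fin r) ℝ :=
    fun x => Matrix.of fun i j => ⟪v x i, v x j⟫ with hGm
  have hGmcont : Continuous Gm :=
    continuous_matrix fun i j => (hvcont i).inner (hvcont j)
  -- det at xb nonzero
  have hvxb : v xb = fun i => (b i : EuclideanSpace ℝ (Fin n)) := funext fun i => hwb i
  have hbind : LinearIndependent ℝ (v xb) := by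
    rw [hvxb]
    exact b.linearIndependent.map' (S xb).subtype (Submodule.ker_subtype _)
  have hdet0 : (Gm xb).det ≠ 0 := gram_det_ne_zero hbind
  -- curve
  set xt : ℝ → EuclideanSpace ℝ (Fin n) := fun t => xb + t • d with hxt
  have hxtcont : Continuous xt := continuous_const.add (continuous_id.smul continuous_const)
  have hxt0 : xt 0 = xb := by simp [hxt]
  have hEv : ∀ᶠ t in nhds (0 : ℝ), xt t ∈ V ∧ (Gm (xt t)).det ≠ 0 := by
    have h1 : ∀ᶠ t in nhds (0 : ℝ), xt t ∈ V := by
      have := hxtcont.continuousAt (x := (0:ℝ))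
      rw [ContinuousAt, hxt0] at this
      exact this hV
    have h2 : ∀ᶠ t in nhds (0 : ℝ), (Gm (xt t)).det ≠ 0 := by
      have hc : ContinuousAt (fun t => (Gm (xt t)).det) 0 :=
        (hGmcont.matrix_det.comp hxtcont).continuousAt
      refine hc.eventually_ne ?_
      show (Gm (xt 0)).det ≠ 0
      rw [hxt0]; exact hdet0
    exact h1.and h2
  -- coefficients
  set g : ℝ → Fin r → ℝ := fun t j => ⟪v (xt t) j, 𝒜 (xt t) Y⟫ with hg
  set c : ℝ → Fin r → ℝ := fun t => (Gm (xt t))⁻¹.mulVec (g t) with hc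
  -- representation
  have hrep : ∀ t, xt t ∈ V → (Gm (xt t)).det ≠ 0 →
      𝒜 (xt t) Y = ∑ i, c t i • v (xt t) i := by
    intro t htV htd
    have hind : LinearIndependent ℝ (v (xt t)) := linearIndependent_of_gram_det htd
    have hle : Submodule.span ℝ (Set.range (v (xt t))) ≤ S (xt t) := by
      rw [Submodule.span_le]
      rintro _ ⟨i, rfl⟩
      exact Submodule.mem_map.mpr ⟨w i, hwW i, rfl⟩
    have hspan : Submodule.span ℝ (Set.range (v (xt t))) = S (xt t) := by
      apply Submodule.eq_of_le_of_finrank_eq hle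
      rw [finrank_span_eq_card hind, hr _ htV, Fintype.card_fin]
    have hmem : 𝒜 (xt t) Y ∈ Submodule.span ℝ (Set.range (v (xt t))) := by
      rw [hspan]
      exact Submodule.mem_map.mpr ⟨Y, hYW, rfl⟩
    obtain ⟨a, ha⟩ := Submodule.mem_span_range_iff_exists_fun ℝ |>.mp hmem
    have hac : a = c t := coeff_eq htd ha
    rw [← ha, hac]
  -- derivative facts
  have hderiv : ∀ u : 𝔽, HasDerivAt (fun t => (⟪u, fderiv ℝ G (xt t) d⟫ : ℝ))
      (⟪u, fderiv ℝ (fderiv ℝ G) xb d d⟫ : ℝ) 0 := by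
    intro u
    have hcv : HasDerivAt xt d 0 := by
      have h0 : HasDerivAt (fun t : ℝ => t • d) ((1 : ℝ) • d) 0 := (hasDerivAt_id 0).smul_const d
      simpa [hxt] using h0.const_add xb
    have hH : HasFDerivAt (fun x => fderiv ℝ G x) (fderiv ℝ (fderiv ℝ G) xb) (xt 0) := by
      rw [hxt0]
      exact (hDG.differentiable one_ne_zero xb).hasFDerivAt
    have h1 : HasDerivAt (fun t => fderiv ℝ G (xt t)) (fderiv ℝ (fderiv ℝ G) xb d) 0 :=
      hH.comp_hasDerivAt 0 hcv
    have h2 : HasDerivAt (fun t => fderiv ℝ G (xt t) d) (fderiv ℝ (fderiv ℝ G) xb d d) 0 :=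
      (ContinuousLinearMap.apply ℝ 𝔽 d).hasFDerivAt.comp_hasDerivAt 0 h1
    exact ((innerSL ℝ u).hasFDerivAt.comp_hasDerivAt 0 h2 : _)
  set κ : ℝ := ⟪Y, fderiv ℝ (fderiv ℝ G) xb d d⟫ with hκ
  set ψ : ℝ → ℝ := fun t => ⟪Y, fderiv ℝ G (xt t) d⟫ with hψ
  have hψd : HasDerivAt ψ κ 0 := hderiv Y
  have hψ0 : ψ 0 = 0 := by
    show (⟪Y, fderiv ℝ G (xt 0) d⟫ : ℝ) = 0
    rw [hxt0, ← ContinuousLinearMap.adjoint_inner_left, hAY, inner_zero_left]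
  set γ : Fin r → ℝ → ℝ := fun i t => ⟪w i, fderiv ℝ G (xt t) d⟫ with hγ
  set sv : Fin r → ℝ := fun i => ⟪w i, fderiv ℝ (fderiv ℝ G) xb d d⟫ with hsv
  have hγd : ∀ i, HasDerivAt (γ i) (sv i) 0 := fun i => hderiv (w i)
  have hγ0 : ∀ i, γ i 0 = 0 := by
    intro i
    show (⟪w i, fderiv ℝ G (xt 0) d⟫ : ℝ) = 0
    rw [hxt0]
    exact hWd (w i) (hwW i)
  -- slope limits
  have hslope : ∀ (φ : ℝ → ℝ) (sφ : ℝ), HasDerivAt φ sφ 0 → φ 0 = 0 →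
      Tendsto (fun t => φ t / t) (nhdsWithin (0 : ℝ) {(0:ℝ)}ᶜ) (nhds sφ) := by
    intro φ sφ hφ hφ0
    have h := hasDerivAt_iff_tendsto_slope.mp hφ
    refine Filter.Tendsto.congr' ?_ h
    filter_upwards with t
    simp [slope_def_field, hφ0]
  have hT1 : Tendsto (fun t => ψ t / t) (nhdsWithin (0 : ℝ) {(0:ℝ)}ᶜ) (nhds κ) :=
    hslope ψ κ hψd hψ0
  -- continuity of coefficients
  have hGminv : ContinuousAt (fun t => (Gm (xt t))⁻¹) 0 := by
    have h1 : ContinuousAt Inv.inv (Gm (xt 0)) := by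
      rw [hxt0]
      refine continuousAt_matrix_inv _ ?_
      have : ContinuousAt (Inv.inv : ℝ → ℝ) (Gm xb).det := continuousAt_inv₀ hdet0
      simpa [Ring.inverse_eq_inv'] using this
    have h2 : ContinuousAt (fun t => Gm (xt t)) 0 := (hGmcont.comp hxtcont).continuousAt
    exact ContinuousAt.comp (x := (0:ℝ)) (f := fun t => Gm (xt t)) h1 h2
  have hg0 : g 0 = 0 := by
    funext j
    show (⟪v (xt 0) j, 𝒜 (xt 0) Y⟫ : ℝ) = 0
    rw [hxt0, hAY, inner_zero_right]
  have hgcont : ContinuousAt g 0 := by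
    rw [continuousAt_pi]
    intro j
    exact (((hvcont j).comp hxtcont).inner (hAYcont.comp hxtcont)).continuousAt
  have hctend : ∀ i, Tendsto (fun t => c t i) (nhds (0:ℝ)) (nhds 0) := by
    intro i
    have hterm : ∀ j, Tendsto (fun t => (Gm (xt t))⁻¹ i j * g t j) (nhds (0:ℝ))
        (nhds ((Gm (xt 0))⁻¹ i j * g 0 j)) := by
      intro j
      have hinv_ij : ContinuousAt (fun t => (Gm (xt t))⁻¹ i j) 0 :=
        ((continuous_apply j).continuousAt.comp
          ((continuous_apply i).continuousAt.comp hGminv))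
      exact hinv_ij.tendsto.mul ((continuous_apply j).continuousAt.comp hgcont).tendsto
    have hsum := tendsto_finset_sum (Finset.univ : Finset (Fin r)) (fun j _ => hterm j)
    have hz : (∑ j, (Gm (xt 0))⁻¹ i j * g 0 j) = 0 := by rw [hg0]; simp
    rw [hz] at hsum
    refine hsum.congr fun t => ?_
    simp [hc, Matrix.mulVec, dotProduct]
  have hT2 : Tendsto (fun t => ψ t / t) (nhdsWithin (0 : ℝ) {(0:ℝ)}ᶜ) (nhds 0) := by
    have heq : ∀ᶠ t in nhdsWithin (0 : ℝ) {(0:ℝ)}ᶜ,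
        (∑ i, c t i * (γ i t / t)) = ψ t / t := by
      filter_upwards [eventually_nhdsWithin_of_eventually_nhds hEv] with t ht
      have hrept := hrep t ht.1 ht.2
      have hψt : ψ t = ∑ i, c t i * γ i t := by
        show (⟪Y, fderiv ℝ G (xt t) d⟫ : ℝ) = _
        rw [← ContinuousLinearMap.adjoint_inner_left]
        show (⟪𝒜 (xt t) Y, d⟫ : ℝ) = _
        rw [hrept, sum_inner]
        refine Finset.sum_congr rfl fun i _ => ?_
        rw [real_inner_smul_left]
        congr 1
        exact ContinuousLinearMap.adjoint_inner_left _ _ _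
      rw [hψt, Finset.sum_div]
      refine Finset.sum_congr rfl fun i _ => ?_
      rw [mul_div_assoc]
    refine Filter.Tendsto.congr' heq ?_
    have hlim : Tendsto (fun t => ∑ i, c t i * (γ i t / t))
        (nhdsWithin (0 : ℝ) {(0:ℝ)}ᶜ) (nhds (∑ i : Fin r, 0 * sv i)) := by
      apply tendsto_finset_sum
      intro i _
      exact ((hctend i).mono_left nhdsWithin_le_nhds).mul (hslope (γ i) (sv i) (hγd i) (hγ0 i))
    simpa using hlim
  have : κ = 0 := tendsto_nhds_unique hT1 hT2
  exact this

end Aux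

theorem stmt_11 {n : ℕ} {𝔽 : Type*} [NormedAddCommGroup 𝔽] [InnerProductSpace ℝ 𝔽]
    [FiniteDimensional ℝ 𝔽]
    (f : EuclideanSpace ℝ (Fin n) → ℝ) (hf : ContDiff ℝ 2 f)
    (G : EuclideanSpace ℝ (Fin n) → 𝔽) (hG : ContDiff ℝ 2 G)
    (C : Set 𝔽) (hCne : C.Nonempty) (hCcl : IsClosed C) (hCconv : Convex ℝ C)
    (hCcone : ∀ c : ℝ, 0 ≤ c → ∀ x ∈ C, c • x ∈ C)
    (xb : EuclideanSpace ℝ (Fin n)) (hxb : G xb = 0)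
    (L : Set (EuclideanSpace ℝ (Fin n))) (hL : L = {d | fderiv ℝ G xb d ∈ C})
    (F : Set 𝔽) (hF : IsMinimalFace C (fderiv ℝ G xb '' L) F)
    (V : Set (EuclideanSpace ℝ (Fin n))) (hV : V ∈ nhds xb)
    (hSCRSC : ∀ F' : Set 𝔽, IsFace C F' → F' ⊆ F → ∃ r : ℕ, ∀ x ∈ V,
      finrank ℝ ↥(((Submodule.span ℝ F')ᗮ).map
        (ContinuousLinearMap.adjoint (fderiv ℝ G x)).toLinearMap) = r) :
    ∀ d : EuclideanSpace ℝ (Fin n), fderiv ℝ G xb d ∈ C →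
      ⟪gradient f xb, d⟫ = (0 : ℝ) →
      ∀ Yb₁ ∈ polarCone C, ∀ Yb₂ ∈ polarCone C,
        -gradient f xb = ContinuousLinearMap.adjoint (fderiv ℝ G xb) Yb₁ →
        -gradient f xb = ContinuousLinearMap.adjoint (fderiv ℝ G xb) Yb₂ →
        ⟪fderiv ℝ (fderiv ℝ G) xb d d, Yb₁⟫ = (⟪fderiv ℝ (fderiv ℝ G) xb d d, Yb₂⟫ : ℝ) := by
  intro d hd hgd Yb₁ hY₁ Yb₂ hY₂ hadj₁ hadj₂
  classical
  set z := fderiv ℝ G xb d with hz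
  have hCface : IsFace C C := ⟨hCconv, IsExtreme.rfl⟩
  have hne : ({F'' | IsFace C F'' ∧ z ∈ F''} : Set (Set 𝔽)).Nonempty := ⟨C, hCface, hd⟩
  set F' : Set 𝔽 := ⋂₀ {F'' | IsFace C F'' ∧ z ∈ F''} with hF'
  have hF'face : IsFace C F' :=
    ⟨convex_sInter (fun s hs => hs.1.1), isExtreme_sInter hne (fun s hs => hs.1.2)⟩
  have hzF' : z ∈ F' := fun s hs => hs.2
  have hdL : d ∈ L := by rw [hL]; exact hd
  have hzF : z ∈ F := hF.2.1 ⟨d, hdL, rfl⟩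
  have hF'F : F' ⊆ F := sInter_subset_of_mem ⟨hF.1, hzF⟩
  obtain ⟨r, hr⟩ := hSCRSC F' hF'face hF'F
  have hYz : ∀ Y' : 𝔽, -gradient f xb = ContinuousLinearMap.adjoint (fderiv ℝ G xb) Y' →
      (⟪Y', z⟫ : ℝ) = 0 := by
    intro Y' hadj
    have h1 : (⟪ContinuousLinearMap.adjoint (fderiv ℝ G xb) Y', d⟫ : ℝ) = ⟪Y', z⟫ :=
      ContinuousLinearMap.adjoint_inner_left _ _ _
    rw [← h1, ← hadj, inner_neg_left, hgd, neg_zero]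
  have horthm : ∀ Y' ∈ polarCone C, (⟪Y', z⟫ : ℝ) = 0 →
      Y' ∈ (Submodule.span ℝ F')ᗮ := by
    intro Y' hY' hYz'
    have hsub : F' ⊆ {u | u ∈ C ∧ ⟪Y', u⟫ = (0:ℝ)} :=
      sInter_subset_of_mem ⟨face_inter_polar C hCconv Y' hY', hd, hYz'⟩
    have hle : Submodule.span ℝ F' ≤ LinearMap.ker ((innerSL ℝ Y').toLinearMap) := by
      rw [Submodule.span_le]
      intro u hu
      have := (hsub hu).2
      simpa [LinearMap.mem_ker] using this
    rw [Submodule.mem_orthogonal]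
    intro u hu
    have hk := hle hu
    rw [LinearMap.mem_ker] at hk
    rw [real_inner_comm]
    simpa using hk
  have hY₁o := horthm Yb₁ hY₁ (hYz Yb₁ hadj₁)
  have hY₂o := horthm Yb₂ hY₂ (hYz Yb₂ hadj₂)
  have hYW : Yb₁ - Yb₂ ∈ (Submodule.span ℝ F')ᗮ := Submodule.sub_mem _ hY₁o hY₂o
  have hAY : ContinuousLinearMap.adjoint (fderiv ℝ G xb) (Yb₁ - Yb₂) = 0 := by
    rw [map_sub, ← hadj₁, ← hadj₂, sub_self]
  have hWd : ∀ w ∈ (Submodule.span ℝ F')ᗮ, (⟪w, fderiv ℝ G xb d⟫ : ℝ) = 0 := by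
    intro w hw
    rw [real_inner_comm]
    exact (Submodule.mem_orthogonal _ w).mp hw z (Submodule.subset_span hzF')
  have hkey := key G hG xb d ((Submodule.span ℝ F')ᗮ) V hV r hr (Yb₁ - Yb₂) hYW hAY hWd
  have hfin : (⟪fderiv ℝ (fderiv ℝ G) xb d d, Yb₁ - Yb₂⟫ : ℝ) = 0 := by
    rw [real_inner_comm]; exact hkey
  rw [inner_sub_right] at hfin
  linarith
end

section
/- Let f : ℝⁿ → ℝ and G : ℝⁿ → 𝔽 be twice continuously differentiable, C ⊆ 𝔽 a nonempty closed convex cone, and x̄ ∈ ℝⁿ with G(x̄) = 0. If the rank of DG(x) is the same for all x in some neighborhood of x̄, then for every d ∈ ℝⁿ with DG(x̄)d = 0 and any two multipliers Ȳ₁, Ȳ₂ ∈ C° satisfying −∇f(x̄) = DG(x̄)*[Ȳ₁] = DG(x̄)*[Ȳ₂], one has ⟨D²G(x̄)[d, d], Ȳ₁⟩ = ⟨D²G(x̄)[d, d], Ȳ₂⟩. -/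
open Set Module RealInnerProductSpace

open ContinuousLinearMap in
/-- Under a constant-rank assumption, if `A 0 d = 0` then the derivative `B` of `A` at `0`
satisfies `B d ∈ range (A 0)`. -/
lemma constant_rank_key {E F : Type*}
    [NormedAddCommGroup E] [InnerProductSpace ℝ E] [FiniteDimensional ℝ E]
    [NormedAddCommGroup F] [InnerProductSpace ℝ F] [FiniteDimensional ℝ F]
    (A : ℝ → (E →L[ℝ] F)) (B : E →L[ℝ] F) (hA : HasDerivAt A B 0)
    (hrank : ∀ᶠ t in nhds (0:ℝ),
      finrank ℝ (LinearMap.range (A t).toLinearMap)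
        = finrank ℝ (LinearMap.range (A 0).toLinearMap))
    (d : E) (hd : A 0 d = 0) :
    B d ∈ LinearMap.range (A 0).toLinearMap := by
  classical
  set K : Submodule ℝ E := LinearMap.ker (A 0).toLinearMap with hKdef
  set L : Submodule ℝ E := Kᗮ with hLdef
  set V : Submodule ℝ F := LinearMap.range (A 0).toLinearMap with hVdef
  let Q : F →L[ℝ] V := V.orthogonalProjectionOnto
  let ι : L →L[ℝ] E := L.subtypeL
  set M : ℝ → (L →L[ℝ] V) := fun t => Q.comp ((A t).comp ι) with hMdef
  have hMapp : ∀ (t : ℝ) (x : L), M t x = Q (A t (x : E)) := fun t x => rfl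
  -- dimension count
  have hdim : finrank ℝ L = finrank ℝ V := by
    have h1 := Submodule.finrank_add_finrank_orthogonal K
    have h2 := LinearMap.finrank_range_add_finrank_ker (A 0).toLinearMap
    rw [hKdef] at h1
    rw [hLdef, hVdef, hKdef]
    omega
  -- injectivity of M 0
  have hM0inj : Function.Injective (M 0) := by
    have key : ∀ x : L, M 0 x = 0 → x = 0 := by
      intro x hx
      have hxV : (A 0) (x : E) ∈ V := ⟨(x : E), rfl⟩
      have hproj := Submodule.orthogonalProjectionOnto_mem_subspace_eq_self (K := V) ⟨(A 0) (x : E), hxV⟩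
      have hx' : Q ((A 0) (x : E)) = 0 := hx
      have h0 : (A 0) (x : E) = 0 := by
        have : (⟨(A 0) (x : E), hxV⟩ : V) = 0 := by rw [← hproj]; exact hx'
        simpa [Subtype.ext_iff] using this
      have hxK : (x : E) ∈ K := by simpa [hKdef, LinearMap.mem_ker] using h0
      have hxL : (x : E) ∈ Kᗮ := x.2
      have : ⟪(x : E), (x : E)⟫ = (0 : ℝ) :=
        (Submodule.mem_orthogonal K (x : E)).1 hxL (x : E) hxK
      exact Subtype.ext (inner_self_eq_zero.mp this)
    intro a b hab
    have := key (a - b) (by rw [map_sub, hab, sub_self])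
    exact sub_eq_zero.mp this
  have hM0surj : Function.Surjective (M 0) :=
    (LinearMap.injective_iff_surjective_of_finrank_eq_finrank hdim).1 hM0inj
  let e0 : L ≃L[ℝ] V :=
    LinearEquiv.toContinuousLinearEquiv
      (LinearEquiv.ofBijective (M 0).toLinearMap ⟨hM0inj, hM0surj⟩)
  have he0 : (e0 : L →L[ℝ] V) = M 0 := by ext x; rfl
  -- eventual invertibility of M t
  have hMdiff : DifferentiableAt ℝ M 0 :=
    (differentiableAt_const Q).clm_comp (hA.differentiableAt.clm_comp (differentiableAt_const ι))
  have hEvInv : ∀ᶠ t in nhds (0:ℝ), (M t).IsInvertible := by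
    have hmem : Set.range ((↑) : (L ≃L[ℝ] V) → L →L[ℝ] V) ∈ nhds (M 0) := by
      rw [← he0]; exact e0.nhds
    filter_upwards [hMdiff.continuousAt.eventually_mem hmem] with t ht
    obtain ⟨e, he⟩ := ht
    exact ⟨e, he⟩
  -- the curve in the kernel
  set c : ℝ → E := fun t => d - ι ((M t).inverse (Q (A t d))) with hcdef
  have hker : ∀ᶠ t in nhds (0:ℝ), A t (c t) = 0 := by
    filter_upwards [hEvInv, hrank] with t hinv hrk
    have hMtinj : Function.Injective (M t) := by
      obtain ⟨e, he⟩ := hinv; rw [← he]; exact e.injective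
    set g : L →ₗ[ℝ] F := (A t).toLinearMap.comp L.subtype with hgdef
    have hginj : Function.Injective g := by
      intro x y hxy
      apply hMtinj
      show Q ((A t) (x : E)) = Q ((A t) (y : E))
      exact congrArg Q hxy
    have hrange : LinearMap.range g = LinearMap.range (A t).toLinearMap := by
      apply Submodule.eq_of_le_of_finrank_le
      · rintro _ ⟨x, rfl⟩; exact ⟨(x : E), rfl⟩
      · rw [LinearMap.finrank_range_of_inj hginj, hrk, ← hdim]
    have hmem : (A t) d ∈ LinearMap.range g := by
      rw [hrange]; exact ⟨d, rfl⟩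
    obtain ⟨w, hw⟩ := hmem
    have hiv : (M t).inverse (Q (A t d)) = w := by
      rw [hinv.inverse_apply_eq, ← hw]
      rfl
    show (A t) (d - ι ((M t).inverse (Q (A t d)))) = 0
    rw [hiv, map_sub, show (A t) (ι w) = g w from rfl, hw, sub_self]
  -- differentiability of the curve
  have hAd : DifferentiableAt ℝ (fun t => A t d) 0 :=
    hA.differentiableAt.clm_apply (differentiableAt_const d)
  have hQAd : DifferentiableAt ℝ (fun t => Q (A t d)) 0 := Q.differentiableAt.comp 0 hAd
  have hinv0 : DifferentiableAt ℝ (fun t => (M t).inverse) 0 := by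
    have h1 : ContDiffAt ℝ 1 ContinuousLinearMap.inverse (M 0) := by
      rw [← he0]; exact contDiffAt_map_inverse e0
    exact (h1.differentiableAt one_ne_zero).comp 0 hMdiff
  have hcd : DifferentiableAt ℝ c 0 :=
    (differentiableAt_const d).sub (ι.differentiableAt.comp 0 (hinv0.clm_apply hQAd))
  have hc0 : c 0 = d := by
    simp [hcdef, hd]
  have hψ : HasDerivAt (fun t => A t (c t)) (B (c 0) + A 0 (deriv c 0)) 0 :=
    hA.clm_apply hcd.hasDerivAt
  have hψ0 : HasDerivAt (fun t => A t (c t)) 0 0 :=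
    (hasDerivAt_const (0:ℝ) (0:F)).congr_of_eventuallyEq hker
  have huniq : B (c 0) + A 0 (deriv c 0) = 0 := hψ.unique hψ0
  rw [hc0] at huniq
  refine ⟨-(deriv c 0), ?_⟩
  have : B d = -((A 0) (deriv c 0)) := eq_neg_of_add_eq_zero_left huniq
  simpa [map_neg] using this.symm

theorem stmt_12 {n : ℕ} {𝔽 : Type*} [NormedAddCommGroup 𝔽] [InnerProductSpace ℝ 𝔽]
    [FiniteDimensional ℝ 𝔽]
    (f : EuclideanSpace ℝ (Fin n) → ℝ) (hf : ContDiff ℝ 2 f)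
    (G : EuclideanSpace ℝ (Fin n) → 𝔽) (hG : ContDiff ℝ 2 G)
    (C : Set 𝔽) (hCne : C.Nonempty) (hCcl : IsClosed C) (hCconv : Convex ℝ C)
    (hCcone : ∀ c : ℝ, 0 ≤ c → ∀ x ∈ C, c • x ∈ C)
    (xb : EuclideanSpace ℝ (Fin n)) (hxb : G xb = 0)
    (hcr : ∃ r : ℕ, ∀ᶠ x in nhds xb,
      finrank ℝ ↥(LinearMap.range (fderiv ℝ G x).toLinearMap) = r) :
    ∀ d : EuclideanSpace ℝ (Fin n), fderiv ℝ G xb d = 0 →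
      ∀ Yb₁ ∈ polarCone C, ∀ Yb₂ ∈ polarCone C,
        -gradient f xb = ContinuousLinearMap.adjoint (fderiv ℝ G xb) Yb₁ →
        -gradient f xb = ContinuousLinearMap.adjoint (fderiv ℝ G xb) Yb₂ →
        ⟪fderiv ℝ (fderiv ℝ G) xb d d, Yb₁⟫ = (⟪fderiv ℝ (fderiv ℝ G) xb d d, Yb₂⟫ : ℝ) := by
  intro d hd Yb₁ hY1 Yb₂ hY2 h1 h2
  obtain ⟨r, hr⟩ := hcr
  set A : ℝ → (EuclideanSpace ℝ (Fin n) →L[ℝ] 𝔽) := fun t => fderiv ℝ G (xb + t • d) with hAdef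
  have h00 : xb + (0:ℝ) • d = xb := by simp
  have hγ : HasDerivAt (fun t : ℝ => xb + t • d) d 0 := by
    simpa using ((hasDerivAt_id (0:ℝ)).smul_const d).const_add xb
  have hfd : ContDiff ℝ 1 (fderiv ℝ G) := hG.fderiv_right (by norm_num)
  have hF : HasFDerivAt (fderiv ℝ G) (fderiv ℝ (fderiv ℝ G) xb) (xb + (0:ℝ) • d) := by
    rw [h00]
    exact (hfd.differentiable one_ne_zero xb).hasFDerivAt
  have hAder : HasDerivAt A (fderiv ℝ (fderiv ℝ G) xb d) 0 := hF.comp_hasDerivAt 0 hγ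
  have hA0 : A 0 = fderiv ℝ G xb := by rw [hAdef]; simp
  have htend : Filter.Tendsto (fun t : ℝ => xb + t • d) (nhds 0) (nhds xb) := by
    have hcont : Continuous fun t : ℝ => xb + t • d := by continuity
    have := hcont.tendsto 0
    rwa [h00] at this
  have hrt : ∀ᶠ t in nhds (0:ℝ), finrank ℝ (LinearMap.range (A t).toLinearMap) = r :=
    htend.eventually hr
  have hr0 : finrank ℝ (LinearMap.range (A 0).toLinearMap) = r := hrt.self_of_nhds
  have hmem := constant_rank_key A _ hAder
    (by filter_upwards [hrt] with t ht; rw [ht, hr0]) d (by rw [hA0]; exact hd)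
  rw [hA0] at hmem
  obtain ⟨z, hz⟩ := hmem
  have hadj : ContinuousLinearMap.adjoint (fderiv ℝ G xb) (Yb₁ - Yb₂) = 0 := by
    rw [map_sub, ← h1, ← h2, sub_self]
  have hzero : ⟪fderiv ℝ (fderiv ℝ G) xb d d, Yb₁ - Yb₂⟫ = (0:ℝ) := by
    have hz' : (fderiv ℝ G xb) z = fderiv ℝ (fderiv ℝ G) xb d d := hz
    rw [← hz', ← ContinuousLinearMap.adjoint_inner_right, hadj, inner_zero_right]
  rw [inner_sub_right] at hzero
  linarith
end

section
/- Let ζ_1, …, ζ_s : ℝⁿ → ℝ be continuously differentiable functions and x̄ ∈ ℝⁿ be such that ζ_i(x̄) = 0 for every i = 1, …, s. Assume the dimension of the span of {∇ζ_1(x), …, ∇ζ_s(x)} is the same for all x in some neighborhood of x̄, and that there exists γ ∈ ℝˢ with γ_i > 0 for all i such that Σ_{i=1}^{s} γ_i ∇ζ_i(x̄) = 0. Then there exists a neighborhood U of x̄ such that for every x ∈ U, if ζ_i(x) ≥ 0 for all i = 1, …, s, then ζ_i(x) = 0 for all i = 1, …, s. -/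
open Set Module Filter Topology

section key

variable {E : Type*} [NormedAddCommGroup E] [InnerProductSpace ℝ E] [FiniteDimensional ℝ E]
  {F : Type*} [NormedAddCommGroup F] [NormedSpace ℝ F] [FiniteDimensional ℝ F]

theorem key_lemma (Φ : E → F) (g : E → ℝ) (xb : E) (hΦ : ContDiff ℝ 1 Φ) (hg : ContDiff ℝ 1 g)
    (hΦ0 : Φ xb = 0) (hg0 : g xb = 0) (hdg0 : fderiv ℝ g xb = 0)
    (hsurj : Function.Surjective (fderiv ℝ Φ xb))
    (hker : ∀ᶠ x in 𝓝 xb, ∀ v, fderiv ℝ Φ x v = 0 → fderiv ℝ g x v = 0)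
    {ε : ℝ} (hε : 0 < ε) :
    ∀ᶠ x in 𝓝 xb, |g x| ≤ ε * ‖Φ x‖ := by
  classical
  set L : E →L[ℝ] F := fderiv ℝ Φ xb with hLdef
  set K : Submodule ℝ E := LinearMap.ker (L : E →ₗ[ℝ] F) with hKdef
  let P : E →L[ℝ] K := K.orthogonalProjection
  let A : E →L[ℝ] F × K := L.prod P
  have hAinj : Function.Injective A := by
    suffices h0 : ∀ v, A v = 0 → v = 0 by
      intro a b hab
      have : A (a - b) = 0 := by rw [map_sub, hab, sub_self]
      have := h0 _ this
      rwa [sub_eq_zero] at this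
    intro v hv
    have h1 : L v = 0 := congrArg Prod.fst hv
    have h2 : P v = 0 := congrArg Prod.snd hv
    have hvK : v ∈ K := h1
    have := Submodule.orthogonalProjection_mem_subspace_eq_self (K := K) ⟨v, hvK⟩
    rw [show ((⟨v, hvK⟩ : K) : E) = v from rfl] at this
    have : (⟨v, hvK⟩ : K) = 0 := by rw [← this]; exact h2
    exact congrArg Subtype.val this
  have hfr : finrank ℝ E = finrank ℝ (F × K) := by
    rw [Module.finrank_prod]
    have h1 := LinearMap.finrank_range_add_finrank_ker (L : E →ₗ[ℝ] F)
    have h2 : LinearMap.range (L : E →ₗ[ℝ] F) = ⊤ := LinearMap.range_eq_top.mpr hsurj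
    rw [h2] at h1
    rw [finrank_top] at h1
    rw [← h1]
  have hAsurj : Function.Surjective A :=
    (LinearMap.injective_iff_surjective_of_finrank_eq_finrank hfr).mp hAinj
  let eL : E ≃ₗ[ℝ] F × K := LinearEquiv.ofBijective (A : E →ₗ[ℝ] F × K) ⟨hAinj, hAsurj⟩
  let e : E ≃L[ℝ] F × K := eL.toContinuousLinearEquiv
  have hecoe : ∀ v, e v = A v := fun v => rfl
  set χ : E → F × K := fun x => (Φ x, P (x - xb)) with hχdef
  have hχcd : ContDiff ℝ 1 χ :=
    hΦ.prodMk ((P.contDiff).comp (contDiff_id.sub contDiff_const))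
  have hχf : HasFDerivAt χ (e : E →L[ℝ] F × K) xb := by
    have h1 : HasFDerivAt Φ L xb := (hΦ.differentiable one_ne_zero xb).hasFDerivAt
    have h2 : HasFDerivAt (fun x => P (x - xb)) P xb := by
      have := (P.hasFDerivAt (x := xb)).sub_const (P xb)
      have heq : (fun x => P x - P xb) = fun x => P (x - xb) := by
        funext x; rw [map_sub]
      rwa [heq] at this
    have h3 : HasFDerivAt χ (L.prod P) xb := h1.prodMk h2
    have : (e : E →L[ℝ] F × K) = L.prod P := by
      apply ContinuousLinearMap.ext; intro v; exact hecoe v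
    rwa [this]
  have hχat : ContDiffAt ℝ 1 χ xb := hχcd.contDiffAt
  set ψ : F × K → E := hχat.localInverse hχf one_ne_zero with hψdef
  have hst : HasStrictFDerivAt χ (e : E →L[ℝ] F × K) xb := hχat.hasStrictFDerivAt' hχf one_ne_zero
  have hψ0 : ψ (χ xb) = xb := hχat.localInverse_apply_image hχf one_ne_zero
  have hleft : ∀ᶠ x in 𝓝 xb, ψ (χ x) = x := hst.eventually_left_inverse
  have hright : ∀ᶠ y in 𝓝 (χ xb), χ (ψ y) = y := hst.eventually_right_inverse
  have hψcd : ContDiffAt ℝ 1 ψ (χ xb) := hχat.to_localInverse hχf one_ne_zero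
  obtain ⟨W, hWmem, hWcd⟩ := hψcd.contDiffOn le_rfl (by simp)
  obtain ⟨Wo, hWoW, hWoopen, hWo0⟩ := mem_nhds_iff.mp hWmem
  have hψdiffWo : ∀ y ∈ Wo, DifferentiableAt ℝ ψ y :=
    fun y hy => ((hWcd.mono hWoW).differentiableOn one_ne_zero).differentiableAt
      (hWoopen.mem_nhds hy)
  obtain ⟨S, hSnhds, hSprop⟩ := hker.exists_mem
  have hψS : ψ ⁻¹' S ∈ 𝓝 (χ xb) := by
    have := hψcd.continuousAt
    rw [ContinuousAt, hψ0] at this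
    exact this hSnhds
  obtain ⟨R, hRnhds, hRprop⟩ := hright.exists_mem
  obtain ⟨δ, hδpos, hδball⟩ := Metric.mem_nhds_iff.mp
    (Filter.inter_mem (Filter.inter_mem (hWoopen.mem_nhds hWo0) hψS) hRnhds)
  have hχxb : χ xb = 0 := by
    simp [hχdef, hΦ0]
  have hgdiff : Differentiable ℝ g := hg.differentiable one_ne_zero
  have hΦdiff : Differentiable ℝ Φ := hΦ.differentiable one_ne_zero
  have hfiber : ∀ u : F, ∀ v : K, ((u, v) : F × K) ∈ Metric.ball (χ xb) δ →
      g (ψ (u, v)) = g (ψ (u, 0)) := by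
    intro u v huv
    have hsball : ∀ w : K, w ∈ Metric.ball (0 : K) δ →
        ((u, w) : F × K) ∈ Metric.ball (χ xb) δ := by
      intro w hw
      rw [hχxb, mem_ball_zero_iff] at huv ⊢
      rw [Prod.norm_def] at huv ⊢
      rw [mem_ball_zero_iff] at hw
      exact max_lt (lt_of_le_of_lt (le_max_left _ _) huv) hw
    have hinnerd : ∀ w : K, DifferentiableAt ℝ (fun v : K => ((u, v) : F × K)) w :=
      fun w => (differentiableAt_const u).prodMk differentiableAt_id
    have hcompd : ∀ w : K, ((u, w) : F × K) ∈ Metric.ball (χ xb) δ →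
        DifferentiableAt ℝ (fun v : K => ψ (u, v)) w := by
      intro w hwball
      have hWo : ((u, w) : F × K) ∈ Wo := ((hδball hwball).1).1
      exact (hψdiffWo _ hWo).comp w (hinnerd w)
    have hfder : ∀ w : K, ((u, w) : F × K) ∈ Metric.ball (χ xb) δ →
        fderiv ℝ (fun v : K => g (ψ (u, v))) w = 0 := by
      intro w hwball
      have hWo : ((u, w) : F × K) ∈ Wo := ((hδball hwball).1).1
      have hpreS : ψ (u, w) ∈ S := ((hδball hwball).1).2
      have hd1 : fderiv ℝ (fun v : K => g (ψ (u, v))) w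
          = (fderiv ℝ g (ψ (u, w))).comp (fderiv ℝ (fun v : K => ψ (u, v)) w) := by
        have := fderiv_comp (𝕜 := ℝ) w (hgdiff (ψ (u, w)))
          (hcompd w hwball)
        exact this
      have hd2 : fderiv ℝ (fun v : K => ψ (u, v)) w
          = (fderiv ℝ ψ (u, w)).comp
            (((0 : K →L[ℝ] F)).prod (ContinuousLinearMap.id ℝ K)) := by
        have h3 := fderiv_comp (𝕜 := ℝ) w (hψdiffWo _ hWo) (hinnerd w)
        have h4 : fderiv ℝ (fun v : K => ((u, v) : F × K)) w
            = ((0 : K →L[ℝ] F)).prod (ContinuousLinearMap.id ℝ K) := by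
          exact ((hasFDerivAt_const u w).prodMk (hasFDerivAt_id w)).fderiv
        rw [← h4]
        exact h3
      -- derivative of Φ ∘ ψ near (u, w) is fst
      have heq : (fun y : F × K => Φ (ψ y)) =ᶠ[𝓝 ((u, w) : F × K)] (fun y => y.1) := by
        filter_upwards [Metric.isOpen_ball.mem_nhds hwball] with y hy
        have hyR : χ (ψ y) = y := hRprop _ (hδball hy).2
        calc Φ (ψ y) = (χ (ψ y)).1 := rfl
        _ = y.1 := by rw [hyR]
      have hΦψ : (fderiv ℝ Φ (ψ (u, w))).comp (fderiv ℝ ψ (u, w))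
          = ContinuousLinearMap.fst ℝ F K := by
        have h5 := fderiv_comp (𝕜 := ℝ) ((u, w) : F × K)
          (hΦdiff (ψ (u, w))) (hψdiffWo _ hWo)
        rw [← h5, show (Φ ∘ ψ) = fun y => Φ (ψ y) from rfl, heq.fderiv_eq, fderiv_fst]
      rw [hd1, hd2]
      ext w'
      simp only [ContinuousLinearMap.comp_apply, ContinuousLinearMap.zero_apply]
      apply hSprop _ hpreS
      have : fderiv ℝ Φ (ψ (u, w)) ((fderiv ℝ ψ (u, w))
          ((((0 : K →L[ℝ] F)).prod (ContinuousLinearMap.id ℝ K)) w'))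
          = (ContinuousLinearMap.fst ℝ F K)
            ((((0 : K →L[ℝ] F)).prod (ContinuousLinearMap.id ℝ K)) w') := by
        rw [← hΦψ]; rfl
      rw [this]
      rfl
    have hv : v ∈ Metric.ball (0 : K) δ := by
      rw [hχxb, mem_ball_zero_iff, Prod.norm_def] at huv
      rw [mem_ball_zero_iff]
      exact lt_of_le_of_lt (le_max_right _ _) huv
    have h0 : (0 : K) ∈ Metric.ball (0 : K) δ := Metric.mem_ball_self hδpos
    exact (convex_ball (0 : K) δ).is_const_of_fderivWithin_eq_zero
      (f := fun v : K => g (ψ (u, v)))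
      (fun w hw => ((hgdiff _).comp w (hcompd w (hsball w hw))).differentiableWithinAt)
      (fun w hw => by
        rw [fderivWithin_of_mem_nhds (Metric.isOpen_ball.mem_nhds hw)]
        exact hfder w (hsball w hw)) hv h0
  set G : F → ℝ := fun u => g (ψ (u, 0)) with hGdef
  have h00 : ((0 : F), (0 : K)) = χ xb := by rw [hχxb]; rfl
  have hψxb : ψ ((0 : F), (0 : K)) = xb := by rw [h00, hψ0]
  have hinner0 : DifferentiableAt ℝ (fun u : F => ((u, (0 : K)) : F × K)) 0 :=
    differentiableAt_id.prodMk (differentiableAt_const 0)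
  have hψd0 : DifferentiableAt ℝ ψ ((0 : F), (0 : K)) := by
    rw [h00]; exact hψdiffWo _ hWo0
  have hmid : DifferentiableAt ℝ (fun u : F => ψ (u, 0)) 0 := by
    have hmid' : DifferentiableAt ℝ (ψ ∘ fun u : F => ((u, (0 : K)) : F × K)) 0 :=
      DifferentiableAt.comp (g := ψ) (f := fun u : F => ((u, (0 : K)) : F × K)) 0 hψd0 hinner0
    exact hmid'
  have hGdiff : DifferentiableAt ℝ G 0 := (hgdiff _).comp 0 hmid
  have hG0 : G 0 = 0 := by
    simp only [hGdef]
    rw [hψxb, hg0]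
  have hGfder : fderiv ℝ G 0 = 0 := by
    have h6 := fderiv_comp (𝕜 := ℝ) (0 : F) (hgdiff (ψ ((0 : F), 0))) hmid
    have h7 : fderiv ℝ g (ψ ((0 : F), (0 : K))) = 0 := by rw [hψxb, ← hdg0]
    have h8 : fderiv ℝ G 0 = fderiv ℝ (g ∘ fun u : F => ψ (u, 0)) 0 := rfl
    rw [h8, h6, h7, ContinuousLinearMap.zero_comp]
  have hGlit : ∀ᶠ u in 𝓝 (0 : F), ‖G u‖ ≤ ε * ‖u‖ := by
    have h8 : HasFDerivAt G (0 : F →L[ℝ] ℝ) 0 := by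
      have := hGdiff.hasFDerivAt; rwa [hGfder] at this
    have h9 := h8.isLittleO
    simp only [hG0, sub_zero, ContinuousLinearMap.zero_apply] at h9
    have h10 := h9.def hε
    simpa using h10
  have hχcont : ContinuousAt χ xb := hχcd.continuous.continuousAt
  have hballmem : Metric.ball (χ xb) δ ∈ 𝓝 (χ xb) := Metric.ball_mem_nhds _ hδpos
  have hΦev : ∀ᶠ x in 𝓝 xb, ‖G (Φ x)‖ ≤ ε * ‖Φ x‖ := by
    have htend : Tendsto Φ (𝓝 xb) (𝓝 0) := by
      rw [← hΦ0]; exact hΦ.continuous.continuousAt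
    exact htend.eventually hGlit
  filter_upwards [hleft, hχcont hballmem, hΦev] with x hx1 hx2 hx3
  have hgx : g x = G (Φ x) := by
    conv_lhs => rw [← hx1]
    exact hfiber (Φ x) (P (x - xb)) hx2
  rw [hgx, ← Real.norm_eq_abs]
  exact hx3

end key

open Set Module Filter Topology RealInnerProductSpace

theorem stmt_13 {n s : ℕ} (ζ : Fin s → EuclideanSpace ℝ (Fin n) → ℝ)
    (hζ : ∀ i, ContDiff ℝ 1 (ζ i))
    (xb : EuclideanSpace ℝ (Fin n)) (hζ0 : ∀ i, ζ i xb = 0)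
    (hcr : ∃ r : ℕ, ∀ᶠ x in nhds xb,
      finrank ℝ ↥(Submodule.span ℝ (Set.range fun i => gradient (ζ i) x)) = r)
    (γ : Fin s → ℝ) (hγ : ∀ i, 0 < γ i)
    (hsum : ∑ i, γ i • gradient (ζ i) xb = 0) :
    ∃ U ∈ nhds xb, ∀ x ∈ U, (∀ i, 0 ≤ ζ i x) → ∀ i, ζ i x = 0 := by
  classical
  obtain ⟨r, hr⟩ := hcr
  rcases Nat.eq_zero_or_pos s with hs | hs
  · subst hs
    exact ⟨Set.univ, Filter.univ_mem, fun x _ _ i => i.elim0⟩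
  have hdiffζ : ∀ i, Differentiable ℝ (ζ i) := fun i => (hζ i).differentiable one_ne_zero
  have hgradcont : ∀ i, Continuous fun x => gradient (ζ i) x := by
    intro i
    have h1 : Continuous fun x => fderiv ℝ (ζ i) x := (hζ i).continuous_fderiv one_ne_zero
    exact ((InnerProductSpace.toDual ℝ (EuclideanSpace ℝ (Fin n))).symm.continuous.comp h1 : _)
  have hgi : ∀ i x (v : EuclideanSpace ℝ (Fin n)), ⟪gradient (ζ i) x, v⟫ = fderiv ℝ (ζ i) x v := fun i x v =>
    InnerProductSpace.toDual_symm_apply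
  set f : Fin s → EuclideanSpace ℝ (Fin n) := fun i => gradient (ζ i) xb with hf
  have hrxb : finrank ℝ (Submodule.span ℝ (Set.range f)) = r := hr.self_of_nhds
  obtain ⟨t, hts, htspan, htind⟩ := exists_linearIndependent ℝ (Set.range f)
  have htfin : t.Finite := htind.setFinite
  haveI := htfin.fintype
  have hcardt : Fintype.card t = r := by
    have := finrank_span_set_eq_card htind
    rw [htspan, hrxb] at this
    rw [Set.toFinset_card] at this
    omega
  let eq1 : Fin r ≃ t := (Fintype.equivFinOfCardEq hcardt).symm
  have hchoose : ∀ j : Fin r, ∃ i : Fin s, f i = (eq1 j : EuclideanSpace ℝ (Fin n)) := fun j => hts (eq1 j).2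
  set ι : Fin r → Fin s := fun j => (hchoose j).choose with hι_def
  have hι : ∀ j, f (ι j) = (eq1 j : EuclideanSpace ℝ (Fin n)) := fun j => (hchoose j).choose_spec
  have hind0 : LinearIndependent ℝ fun j : Fin r => f (ι j) := by
    have heq2 : (fun j : Fin r => f (ι j)) = (fun x : t => (x : EuclideanSpace ℝ (Fin n))) ∘ eq1 := by
      funext j; rw [hι]; rfl
    rw [heq2]
    exact htind.comp eq1 eq1.injective
  -- the maps
  set Φ : EuclideanSpace ℝ (Fin n) → EuclideanSpace ℝ (Fin r) := fun x => WithLp.toLp 2 (fun j => ζ (ι j) x) with hΦdef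
  set g : EuclideanSpace ℝ (Fin n) → ℝ := fun x => ∑ i, γ i * ζ i x with hgdef
  have hΦcd : ContDiff ℝ 1 Φ := contDiff_euclidean.mpr fun j => hζ (ι j)
  have hgcd : ContDiff ℝ 1 g := ContDiff.sum fun i _ => contDiff_const.mul (hζ i)
  have hΦ0 : Φ xb = 0 := by
    ext j; exact hζ0 (ι j)
  have hg0 : g xb = 0 := by
    simp only [hgdef]
    rw [Finset.sum_eq_zero]
    intro i _
    rw [hζ0 i, mul_zero]
  -- derivative of g
  have hgfd : ∀ x, fderiv ℝ g x = ∑ i, γ i • fderiv ℝ (ζ i) x := by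
    intro x
    have : HasFDerivAt g (∑ i, γ i • fderiv ℝ (ζ i) x) x :=
      HasFDerivAt.fun_sum fun i _ => ((hdiffζ i x).hasFDerivAt.const_mul (γ i))
    exact this.fderiv
  have hdg0 : fderiv ℝ g xb = 0 := by
    rw [hgfd]
    ext v
    rw [ContinuousLinearMap.sum_apply, ContinuousLinearMap.zero_apply]
    have : ∀ i ∈ Finset.univ, (γ i • fderiv ℝ (ζ i) xb) v = ⟪γ i • gradient (ζ i) xb, v⟫ := by
      intro i _
      rw [real_inner_smul_left, hgi i xb v]
      rfl
    rw [Finset.sum_congr rfl this, ← sum_inner, hsum, inner_zero_left]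
  -- derivative of Φ componentwise
  have hΦfd : ∀ x (v : EuclideanSpace ℝ (Fin n)) j, fderiv ℝ Φ x v j = fderiv ℝ (ζ (ι j)) x v := by
    intro x v j
    have hcomp : (fun x => EuclideanSpace.proj (𝕜 := ℝ) j (Φ x)) = ζ (ι j) := rfl
    have h2 : fderiv ℝ (ζ (ι j)) x
        = (EuclideanSpace.proj (𝕜 := ℝ) j).comp (fderiv ℝ Φ x) := by
      rw [← hcomp]
      have h3 := fderiv_comp (𝕜 := ℝ) x
        ((EuclideanSpace.proj (𝕜 := ℝ) j).differentiableAt) (hΦcd.differentiable one_ne_zero x)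
      rw [show ((EuclideanSpace.proj (𝕜 := ℝ) j) ∘ Φ)
        = fun x => EuclideanSpace.proj (𝕜 := ℝ) j (Φ x) from rfl] at h3
      rw [h3, ContinuousLinearMap.fderiv]
    rw [h2]
    rfl
  -- surjectivity of the derivative of Φ at xb
  have hsurj : Function.Surjective (fderiv ℝ Φ xb) := by
    set M := fderiv ℝ Φ xb with hM
    have hortho : (LinearMap.range (M : EuclideanSpace ℝ (Fin n) →ₗ[ℝ] EuclideanSpace ℝ (Fin r)))ᗮ = ⊥ := by
      rw [Submodule.eq_bot_iff]
      intro u hu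
      rw [Submodule.mem_orthogonal] at hu
      have hzero : ∑ j, u j • f (ι j) = 0 := by
        have hinner : ∀ v : EuclideanSpace ℝ (Fin n), ⟪∑ j, u j • f (ι j), v⟫ = 0 := by
          intro v
          have h4 : (0:ℝ) = ⟪M v, u⟫ := (hu (M v) (LinearMap.mem_range.mpr ⟨v, rfl⟩)).symm
          have h5 : ⟪M v, u⟫ = ∑ j, (M v j) * u j := by
            rw [PiLp.inner_apply]
            exact Finset.sum_congr rfl fun j _ => by simp [mul_comm]
          rw [h5] at h4
          rw [sum_inner]
          have h6 : ∀ j ∈ Finset.univ, ⟪u j • f (ι j), v⟫ = M v j * u j := by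
            intro j _
            rw [real_inner_smul_left, hgi (ι j) xb v]
            have h7 : M v j = fderiv ℝ (ζ (ι j)) xb v := hΦfd xb v j
            rw [h7]
            ring
          rw [Finset.sum_congr rfl h6]
          exact h4.symm
        have := hinner (∑ j, u j • f (ι j))
        rwa [inner_self_eq_zero] at this
      have hcoef := Fintype.linearIndependent_iff.mp hind0 (fun j => u j) hzero
      ext j
      exact hcoef j
    have hrange : LinearMap.range (M : EuclideanSpace ℝ (Fin n) →ₗ[ℝ] EuclideanSpace ℝ (Fin r)) = ⊤ := Submodule.orthogonal_eq_bot_iff.mp hortho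
    exact LinearMap.range_eq_top.mp hrange
  -- kernel condition eventually
  have hop : ∀ᶠ x in 𝓝 xb, LinearIndependent ℝ fun j : Fin r => gradient (ζ (ι j)) x := by
    have hcont : Continuous fun x => (fun j : Fin r => gradient (ζ (ι j)) x) :=
      continuous_pi fun j => hgradcont (ι j)
    have hopen := isOpen_setOf_linearIndependent (𝕜 := ℝ) (E := EuclideanSpace ℝ (Fin n)) (ι := Fin r)
    have hmem : (fun j : Fin r => gradient (ζ (ι j)) xb) ∈ {q : Fin r → EuclideanSpace ℝ (Fin n) | LinearIndependent ℝ q} :=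
      hind0
    exact hcont.continuousAt (hopen.mem_nhds hmem)
  have hker : ∀ᶠ x in 𝓝 xb, ∀ v, fderiv ℝ Φ x v = 0 → fderiv ℝ g x v = 0 := by
    filter_upwards [hr, hop] with x hx1 hx2
    intro v hv
    have hle : Submodule.span ℝ (Set.range fun j : Fin r => gradient (ζ (ι j)) x)
        ≤ Submodule.span ℝ (Set.range fun i : Fin s => gradient (ζ i) x) := by
      apply Submodule.span_mono
      rintro w ⟨j, rfl⟩
      exact ⟨ι j, rfl⟩
    have heq3 : Submodule.span ℝ (Set.range fun j : Fin r => gradient (ζ (ι j)) x)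
        = Submodule.span ℝ (Set.range fun i : Fin s => gradient (ζ i) x) := by
      apply Submodule.eq_of_le_of_finrank_le hle
      rw [hx1, finrank_span_eq_card hx2, Fintype.card_fin]
    have hvj : ∀ j : Fin r, ⟪gradient (ζ (ι j)) x, v⟫ = 0 := by
      intro j
      rw [hgi, ← hΦfd x v j, hv]
      rfl
    have hspanperp : ∀ w ∈ Submodule.span ℝ (Set.range fun i : Fin s => gradient (ζ i) x),
        ⟪w, v⟫ = 0 := by
      intro w hw
      rw [← heq3] at hw
      induction hw using Submodule.span_induction with
      | mem w hw => obtain ⟨j, rfl⟩ := hw; exact hvj j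
      | zero => exact inner_zero_left v
      | add a b _ _ ha hb => rw [inner_add_left, ha, hb, add_zero]
      | smul c a _ ha => rw [real_inner_smul_left, ha, mul_zero]
    rw [hgfd]
    rw [ContinuousLinearMap.sum_apply]
    apply Finset.sum_eq_zero
    intro i _
    have h6 : (γ i • fderiv ℝ (ζ i) x) v = γ i * ⟪gradient (ζ i) x, v⟫ := by
      rw [hgi i x v]; rfl
    rw [h6, hspanperp _ (Submodule.subset_span ⟨i, rfl⟩), mul_zero]
  -- the positive constant
  obtain ⟨i0, _, hi0⟩ := Finset.exists_min_image Finset.univ γ ⟨⟨0, hs⟩, Finset.mem_univ _⟩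
  set c : ℝ := γ i0 with hc
  have hcpos : 0 < c := hγ i0
  set ε : ℝ := c / (2 * r + 2) with hε
  have hεpos : 0 < ε := by positivity
  have hbound := key_lemma Φ g xb hΦcd hgcd hΦ0 hg0 hdg0 hsurj hker hεpos
  obtain ⟨U, hU, hUprop⟩ := hbound.exists_mem
  refine ⟨U, hU, ?_⟩
  intro x hx hpos
  have hgnonneg : 0 ≤ g x := Finset.sum_nonneg fun i _ => mul_nonneg (le_of_lt (hγ i)) (hpos i)
  have hterm : ∀ i, γ i * ζ i x ≤ g x := fun i =>
    Finset.single_le_sum (fun i _ => mul_nonneg (le_of_lt (hγ i)) (hpos i)) (Finset.mem_univ i)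
  have hζc : ∀ j : Fin r, c * ζ (ι j) x ≤ g x := by
    intro j
    calc c * ζ (ι j) x ≤ γ (ι j) * ζ (ι j) x :=
          mul_le_mul_of_nonneg_right (hi0 (ι j) (Finset.mem_univ _)) (hpos (ι j))
      _ ≤ g x := hterm (ι j)
  have hnorm : ‖Φ x‖ ≤ ∑ j, ζ (ι j) x := by
    rw [EuclideanSpace.norm_eq]
    have h7 : ∑ j, ‖Φ x j‖ ^ 2 ≤ (∑ j, ‖Φ x j‖) ^ 2 :=
      Finset.sum_sq_le_sq_sum_of_nonneg (fun j _ => norm_nonneg _)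
    calc Real.sqrt (∑ j, ‖Φ x j‖ ^ 2) ≤ Real.sqrt ((∑ j, ‖Φ x j‖) ^ 2) := Real.sqrt_le_sqrt h7
      _ = ∑ j, ‖Φ x j‖ := Real.sqrt_sq (Finset.sum_nonneg fun j _ => norm_nonneg _)
      _ = ∑ j, ζ (ι j) x := Finset.sum_congr rfl fun j _ => Real.norm_of_nonneg (hpos (ι j))
  have hcΦ : c * ‖Φ x‖ ≤ r * g x := by
    calc c * ‖Φ x‖ ≤ c * ∑ j, ζ (ι j) x := mul_le_mul_of_nonneg_left hnorm (le_of_lt hcpos)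
      _ = ∑ j : Fin r, c * ζ (ι j) x := Finset.mul_sum _ _ _
      _ ≤ ∑ _j : Fin r, g x := Finset.sum_le_sum fun j _ => hζc j
      _ = r * g x := by rw [Finset.sum_const, Finset.card_univ, Fintype.card_fin, nsmul_eq_mul]
  have hgb' : g x ≤ ε * ‖Φ x‖ := (le_abs_self _).trans (hUprop x hx)
  have h2r : (0:ℝ) < 2 * (r:ℝ) + 2 := by positivity
  have hgzero : g x = 0 := by
    have h8 : g x * (2 * (r:ℝ) + 2) ≤ ε * ‖Φ x‖ * (2 * (r:ℝ) + 2) :=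
      mul_le_mul_of_nonneg_right hgb' (le_of_lt h2r)
    have h9 : ε * ‖Φ x‖ * (2 * (r:ℝ) + 2) = c * ‖Φ x‖ := by
      rw [hε]
      field_simp
    have h10 : g x * (2*(r:ℝ)+2) ≤ (r:ℝ) * g x := le_trans (h8.trans_eq h9) hcΦ
    have h11 : g x * (2*(r:ℝ)+2) = 2*((r:ℝ)*g x) + 2*g x := by ring
    have h12 : (0:ℝ) ≤ (r:ℝ)*g x := mul_nonneg (Nat.cast_nonneg r) hgnonneg
    linarith
  intro i
  have hall := (Finset.sum_eq_zero_iff_of_nonneg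
    (fun i _ => mul_nonneg (le_of_lt (hγ i)) (hpos i))).mp hgzero i (Finset.mem_univ i)
  have := hγ i
  rcases mul_eq_zero.mp hall with h | h
  · exact absurd h (ne_of_gt this)
  · exact h
end

section
/- Let C ⊆ 𝔽 be a closed convex cone whose linear span has dimension s ≥ 1, and let Y ∈ ri(C) with Y ≠ 0. Then there exist linearly independent vectors η_1, …, η_s ∈ C and scalars α_1, …, α_s > 0 such that Y = Σ_{i=1}^{s} α_i η_i. -/
open Set Module

theorem stmt_14 {𝔽 : Type*} [NormedAddCommGroup 𝔽] [InnerProductSpace ℝ 𝔽]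
    [FiniteDimensional ℝ 𝔽]
    (C : Set 𝔽) (hCcl : IsClosed C) (hCconv : Convex ℝ C)
    (hCcone : ∀ c : ℝ, 0 ≤ c → ∀ x ∈ C, c • x ∈ C)
    (s : ℕ) (hs : s = finrank ℝ ↥(Submodule.span ℝ C)) (hs1 : 1 ≤ s)
    (Y : 𝔽) (hY : Y ∈ intrinsicInterior ℝ C) (hY0 : Y ≠ 0) :
    ∃ η : Fin s → 𝔽, (∀ i, η i ∈ C) ∧ LinearIndependent ℝ η ∧
      ∃ α : Fin s → ℝ, (∀ i, 0 < α i) ∧ Y = ∑ i, α i • η i := by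
  haveI : NeZero s := ⟨by omega⟩
  have hYC : Y ∈ C := intrinsicInterior_subset hY
  have h0C : (0:𝔽) ∈ C := by simpa using hCcone 0 le_rfl Y hYC
  obtain ⟨b, hbC, hYb, hspan, hbli⟩ :=
    exists_linearIndepOn_extension (K := ℝ) (v := id)
      ((linearIndepOn_singleton_iff ℝ).2 hY0) (Set.singleton_subset_iff.2 hYC)
  simp only [Set.image_id] at hspan
  replace hbli : LinearIndependent ℝ ((↑) : b → 𝔽) := hbli
  have hbfin : b.Finite := hbli.setFinite
  haveI : Fintype b := hbfin.fintype
  have hspan' : Submodule.span ℝ b = Submodule.span ℝ C :=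
    le_antisymm (Submodule.span_mono hbC) (Submodule.span_le.2 hspan)
  have hcard : Fintype.card b = s := by
    rw [hs, ← hspan', finrank_span_set_eq_card hbli, Set.toFinset_card]
  -- equiv with Y at 0
  let e0 : Fin s ≃ b := (Fintype.equivFinOfCardEq hcard).symm
  let j : Fin s := e0.symm ⟨Y, hYb rfl⟩
  let e : Fin s ≃ b := (Equiv.swap (0 : Fin s) j).trans e0
  let v : Fin s → 𝔽 := fun i => (e i : 𝔽)
  have hv0 : v 0 = Y := by simp [v, e, j]
  have hvC : ∀ i, v i ∈ C := fun i => hbC (e i).2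
  have hvli : LinearIndependent ℝ v := hbli.comp e e.injective
  -- directions
  set P := affineSpan ℝ C with hP
  have hYP : Y ∈ P := subset_affineSpan ℝ C hYC
  have h0P : (0:𝔽) ∈ P := subset_affineSpan ℝ C h0C
  have hdir : ∀ i, v i ∈ P.direction := fun i => by
    simpa using AffineSubspace.vsub_mem_direction (subset_affineSpan ℝ C (hvC i)) h0P
  set Z : 𝔽 := ∑ i, v i with hZ
  have hZdir : Z ∈ P.direction := Submodule.sum_mem _ (fun i _ => hdir i)
  set u : Fin s → 𝔽 := fun i => v i - (s:ℝ)⁻¹ • Z with hu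
  have hudir : ∀ i, u i ∈ P.direction := fun i =>
    Submodule.sub_mem _ (hdir i) (Submodule.smul_mem _ _ hZdir)
  -- small perturbations stay in C
  have key : ∀ w : 𝔽, w ∈ P.direction → ∀ᶠ t : ℝ in nhds 0, Y + t • w ∈ C := by
    intro w hw
    obtain ⟨y, hy_int, hy_coe⟩ := mem_intrinsicInterior.1 hY
    have hmem : ∀ t : ℝ, Y + t • w ∈ P := fun t => by
      have := AffineSubspace.vadd_mem_of_mem_direction
        (Submodule.smul_mem _ t hw) hYP
      simpa [add_comm] using this
    set f : ℝ → P := fun t => (⟨Y + t • w, hmem t⟩ : P) with hf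
    have hfc : Continuous f := Continuous.subtype_mk (by fun_prop) _
    have h0 : f 0 ∈ interior (((↑) : P → 𝔽) ⁻¹' C) := by
      have : f 0 = y := Subtype.ext (by simp [hf, hy_coe])
      rw [this]; exact hy_int
    have hpre : f ⁻¹' interior (((↑) : P → 𝔽) ⁻¹' C) ∈ nhds (0:ℝ) :=
      hfc.continuousAt.preimage_mem_nhds (isOpen_interior.mem_nhds h0)
    filter_upwards [hpre] with t ht
    exact (interior_subset ht : f t ∈ (((↑) : P → 𝔽) ⁻¹' C))
  have hev : ∀ᶠ t : ℝ in nhds 0, ∀ i, Y + t • u i ∈ C :=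
    Filter.eventually_all.2 fun i => key _ (hudir i)
  obtain ⟨ε, hε, hball⟩ := Metric.eventually_nhds_iff.1 hev
  set t : ℝ := ε / 2 with ht
  have ht0 : 0 < t := by positivity
  have htC : ∀ i, Y + t • u i ∈ C := hball (by
    simp only [dist_zero_right, Real.norm_eq_abs, ht, abs_of_pos (by positivity : (0:ℝ) < ε/2)]
    linarith)
  have hs0 : (s:ℝ) ≠ 0 := Nat.cast_ne_zero.2 (by omega)
  refine ⟨fun i => Y + t • u i, htC, ?_, fun _ => (s:ℝ)⁻¹, fun _ => by positivity, ?_⟩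
  · -- linear independence
    rw [Fintype.linearIndependent_iff]
    intro c hc
    set S : ℝ := ∑ i, c i with hS
    have expand : ∑ i, ((if i = 0 then S else 0) + t * c i - S * (t * (s:ℝ)⁻¹)) • v i
        = ∑ i, c i • (Y + t • u i) := by
      simp only [hu, add_smul, sub_smul, ite_smul, zero_smul, smul_sub, smul_add, smul_smul,
        Finset.sum_add_distrib, Finset.sum_sub_distrib]
      rw [Finset.sum_ite_eq' Finset.univ (0 : Fin s) (fun i => S • v i)]
      rw [← Finset.smul_sum, ← Finset.sum_smul, ← Finset.sum_smul, ← Finset.sum_mul, hv0]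
      simp only [Finset.mem_univ, if_true, ← hS, ← hZ]
      ring_nf
      have hco : ∀ x, (ε * c x * (1/2:ℝ)) = c x * (ε * (1/2)) := fun x => by ring
      simp only [hco, add_sub_assoc]
    have hvals := Fintype.linearIndependent_iff.1 hvli _ (expand.trans hc)
    have hne : ∀ i : Fin s, i ≠ 0 → c i = S * (s:ℝ)⁻¹ := by
      intro i hi
      have := hvals i
      rw [if_neg hi] at this
      have ht0' : t ≠ 0 := ne_of_gt ht0
      field_simp at this ⊢
      nlinarith [this]
    have hsplit : S = c 0 + ((s:ℝ) - 1) * (S * (s:ℝ)⁻¹) := by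
      have h1 : S = c 0 + ∑ i ∈ Finset.univ.erase 0, c i := by
        rw [Finset.add_sum_erase _ _ (Finset.mem_univ _)]
      have h2 : ∑ i ∈ Finset.univ.erase 0, c i
          = ((s:ℝ) - 1) * (S * (s:ℝ)⁻¹) := by
        rw [Finset.sum_congr rfl (fun i hi => hne i (Finset.ne_of_mem_erase hi))]
        rw [Finset.sum_const, Finset.card_erase_of_mem (Finset.mem_univ _),
          Finset.card_univ, Fintype.card_fin, nsmul_eq_mul]
        rw [Nat.cast_sub hs1]
        norm_num
      rw [h2] at h1; exact h1
    have hc0 : c 0 = S * (s:ℝ)⁻¹ := by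
      field_simp at hsplit ⊢
      nlinarith [hsplit]
    have hS0 : S = 0 := by
      have h0 := hvals 0
      rw [if_pos rfl, hc0] at h0
      have : S * (t * (s:ℝ)⁻¹) = t * (S * (s:ℝ)⁻¹) := by ring
      nlinarith [h0]
    intro i
    by_cases hi : i = 0
    · rw [hi, hc0, hS0, zero_mul]
    · rw [hne i hi, hS0, zero_mul]
  · -- the sum
    show Y = ∑ i, (s:ℝ)⁻¹ • (Y + t • u i)
    have husum : ∑ i, u i = 0 := by
      simp only [hu, Finset.sum_sub_distrib, Finset.sum_const, Finset.card_univ,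
        Fintype.card_fin, ← hZ]
      rw [← Nat.cast_smul_eq_nsmul ℝ, smul_smul, mul_inv_cancel₀ hs0, one_smul, sub_self]
    have hsum : ∑ i, ((s:ℝ)⁻¹ • (Y + t • u i)) = Y := by
      simp only [smul_add, Finset.sum_add_distrib, ← Finset.smul_sum, husum, smul_zero,
        add_zero, Finset.sum_const, Finset.card_univ, Fintype.card_fin]
      rw [← Nat.cast_smul_eq_nsmul ℝ, smul_smul, inv_mul_cancel₀ hs0, one_smul]
    exact hsum.symm
end
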